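/- arXiv:1512.06371 — 5 statements merged into one kernel-verified Lean document; each statement's English description precedes it below -/
import Mathlib

section
/- There exists a simple graph G on the positive integers that is I_13-free and satisfies liminf_{n→∞} e(G_n)/n² ≥ 57931/249696, i.e., ≥ (1/4)(1 − 1/13) + 4015/3246048. -/
set_option maxHeartbeats 1000000

open Filter

/-- `G` contains an increasing path of length `k`: vertices
`i₁ < i₂ < ⋯ < i_{k+1}` (all positive integers) with consecutive vertices adjacent. -/
def HasIncPath (G : SimpleGraph ℕ) (k : ℕ) : Prop :=
  ∃ f : Fin (k + 1) → ℕ, (∀ i, 1 ≤ f i) ∧ StrictMono f ∧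
    ∀ i : Fin k, G.Adj (f i.castSucc) (f i.succ)

/-- `e(G_n)`: the number of edges of the subgraph of `G` induced by `{1, …, n}`. -/
noncomputable def edgeCount (G : SimpleGraph ℕ) (n : ℕ) : ℕ :=
  {p : ℕ × ℕ | 1 ≤ p.1 ∧ p.1 < p.2 ∧ p.2 ≤ n ∧ G.Adj p.1 p.2}.ncard

namespace I13

/-- cumulative block-weight table: W 0 = 0, ..., W 13 = 64 -/
def Wt : ℕ → ℕ
  | 0 => 0 | 1 => 5 | 2 => 10 | 3 => 15 | 4 => 19 | 5 => 23 | 6 => 27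
  | 7 => 32 | 8 => 37 | 9 => 43 | 10 => 48 | 11 => 53 | 12 => 59 | _ => 64

/-- the label permutation -/
def piv : ℕ → ℕ
  | 0 => 7 | 1 => 8 | 2 => 9 | 3 => 0 | 4 => 11 | 5 => 1 | 6 => 10
  | 7 => 2 | 8 => 12 | 9 => 3 | 10 => 4 | 11 => 5 | _ => 6

/-- block position from offset within a period -/
def posOf (x : ℕ) : ℕ :=
  (List.filter (fun b => b ≤ x) [5, 10, 15, 19, 23, 27, 32, 37, 43, 48, 53, 59]).length

/-- label of a vertex -/
def lam (v : ℕ) : ℕ := piv (posOf (v / 2 ^ (Nat.log 2 v - 6) - 64))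

lemma piv_le (x : ℕ) : piv x ≤ 12 := by
  unfold piv; split <;> omega

lemma lam_le (v : ℕ) : lam v ≤ 12 := piv_le _

/-- The graph -/
def G : SimpleGraph ℕ where
  Adj u v := (u < v ∧ lam u < lam v) ∨ (v < u ∧ lam v < lam u)
  symm := ⟨by intro u v h; rcases h with h | h; exact Or.inr h; exact Or.inl h⟩
  loopless := ⟨by intro u h; rcases h with ⟨h, _⟩ | ⟨h, _⟩ <;> exact lt_irrefl _ h⟩

lemma no_path : ¬ HasIncPath G 13 := by
  rintro ⟨f, -, hmono, hadj⟩
  have key : ∀ j : Fin 14, (j : ℕ) ≤ lam (f j) := by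
    intro j
    induction j using Fin.induction with
    | zero => exact Nat.zero_le _
    | succ i ih =>
      have h := hadj i
      have hlt : f i.castSucc < f i.succ := hmono (Fin.castSucc_lt_succ (i := i))
      have : lam (f i.castSucc) < lam (f i.succ) := by
        rcases h with ⟨_, h⟩ | ⟨h, _⟩
        · exact h
        · omega
      have := ih
      simp only [Fin.coe_castSucc] at this
      simp only [Fin.val_succ]
      omega
  have h13 := key 13
  have := lam_le (f 13)
  simp at h13
  omega



def start (t : ℕ) : ℕ := (64 + Wt (t % 13)) * 2 ^ (t / 13)

def Qt : ℕ → ℕ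
  | 0 => 34 | 1 => 39 | 2 => 44 | 3 => 0 | 4 => 54 | 5 => 4 | 6 => 49
  | 7 => 8 | 8 => 58 | 9 => 13 | 10 => 18 | 11 => 23 | _ => 29

def Pt : ℕ → ℕ
  | 0 => 0 | 1 => 5 | 2 => 10 | 3 => 0 | 4 => 19 | 5 => 4 | 6 => 23
  | 7 => 8 | 8 => 37 | 9 => 13 | 10 => 18 | 11 => 23 | _ => 29

def dbt (t : ℕ) : ℕ := (2 ^ (t / 13) - 1) * Qt (t % 13) + 2 ^ (t / 13) * Pt (t % 13)

def bIdx (v : ℕ) : ℕ :=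
  13 * (Nat.log 2 v - 6) + posOf (v / 2 ^ (Nat.log 2 v - 6) - 64)

lemma Wt_mono {i : ℕ} (h : i < 13) : Wt i < Wt (i + 1) := by
  interval_cases i <;> simp [Wt]

lemma Wt_le (x : ℕ) : Wt x ≤ 64 := by
  unfold Wt; split <;> omega

lemma start_succ (t : ℕ) : start (t + 1) = (64 + Wt (t % 13 + 1)) * 2 ^ (t / 13) := by
  rcases Nat.lt_or_ge (t % 13) 12 with h | h
  · have h1 : (t + 1) % 13 = t % 13 + 1 := by omega
    have h2 : (t + 1) / 13 = t / 13 := by omega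
    rw [start, h1, h2]
  · have h12 : t % 13 = 12 := by omega
    have h1 : (t + 1) % 13 = 0 := by omega
    have h2 : (t + 1) / 13 = t / 13 + 1 := by omega
    rw [start, h1, h2, h12]
    show 64 * 2 ^ (t / 13 + 1) = (64 + Wt 13) * 2 ^ (t / 13)
    rw [pow_succ]
    norm_num [Wt]
    ring

lemma start_lt (t : ℕ) : start t < start (t + 1) := by
  rw [start_succ, start]
  have h13 : t % 13 < 13 := Nat.mod_lt _ (by norm_num)
  have := Wt_mono h13
  have : 2 ^ (t / 13) ≥ 1 := Nat.one_le_two_pow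
  have h2 : (64 + Wt (t % 13)) < (64 + Wt (t % 13 + 1)) := by omega
  exact mul_lt_mul_of_pos_right h2 (by positivity)

lemma start_mono : StrictMono start := strictMono_nat_of_lt_succ start_lt

lemma start_ge (t : ℕ) : 64 ≤ start t := by
  have : 1 ≤ 2 ^ (t / 13) := Nat.one_le_two_pow
  have : 64 * 1 ≤ (64 + Wt (t % 13)) * 2 ^ (t / 13) :=
    Nat.mul_le_mul (by omega) this
  simpa [start] using this

lemma posOf_le (x : ℕ) : posOf x ≤ 12 :=
  le_trans (List.length_filter_le _ _) (by norm_num)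

lemma posOf_spec {x : ℕ} (h : x < 64) : Wt (posOf x) ≤ x ∧ x < Wt (posOf x + 1) :=
  (by decide : ∀ x, x < 64 → Wt (posOf x) ≤ x ∧ x < Wt (posOf x + 1)) x h

lemma posOf_eq {i x : ℕ} (hi : i < 13) (h1 : Wt i ≤ x) (h2 : x < Wt (i + 1)) :
    posOf x = i := by
  have hx : x < 64 := by
    have := Wt_le (i + 1); omega
  exact (by decide : ∀ x, x < 64 → ∀ i, i < 13 → Wt i ≤ x → x < Wt (i + 1) → posOf x = i)
    x hx i hi h1 h2

lemma log_eq {m v : ℕ} (h1 : 64 * 2 ^ m ≤ v) (h2 : v < 128 * 2 ^ m) :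
    Nat.log 2 v = m + 6 := by
  apply Nat.log_eq_of_pow_le_of_lt_pow
  · calc 2 ^ (m + 6) = 64 * 2 ^ m := by rw [pow_add]; ring
    _ ≤ v := h1
  · calc v < 128 * 2 ^ m := h2
    _ = 2 ^ (m + 6 + 1) := by rw [pow_add]; ring

lemma block_mem {t v : ℕ} (h1 : start t ≤ v) (h2 : v < start (t + 1)) :
    bIdx v = t ∧ lam v = piv (t % 13) := by
  set m := t / 13 with hm
  set i := t % 13 with hi
  have hi13 : i < 13 := Nat.mod_lt _ (by norm_num)
  rw [start_succ] at h2
  rw [start] at h1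
  have hpow : 0 < 2 ^ m := Nat.pow_pos (by norm_num)
  have hlow : 64 * 2 ^ m ≤ v := le_trans (Nat.mul_le_mul_right _ (by omega)) h1
  have hhigh : v < 128 * 2 ^ m := by
    have := Wt_le (i + 1)
    calc v < (64 + Wt (i + 1)) * 2 ^ m := h2
    _ ≤ 128 * 2 ^ m := Nat.mul_le_mul_right _ (by omega)
  have hlog : Nat.log 2 v = m + 6 := log_eq hlow hhigh
  have hlog6 : Nat.log 2 v - 6 = m := by omega
  have hq1 : 64 + Wt i ≤ v / 2 ^ m := (Nat.le_div_iff_mul_le hpow).2 h1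
  have hq2 : v / 2 ^ m < 64 + Wt (i + 1) := by
    rw [Nat.div_lt_iff_lt_mul hpow]
    exact h2
  have hx : posOf (v / 2 ^ m - 64) = i := by
    apply posOf_eq hi13 <;> omega
  constructor
  · rw [bIdx, hlog6, hx]; omega
  · rw [lam, hlog6, hx]

lemma exists_block {v : ℕ} (h : 64 ≤ v) : start (bIdx v) ≤ v ∧ v < start (bIdx v + 1) := by
  set l := Nat.log 2 v with hl
  have hv0 : v ≠ 0 := by omega
  have h6 : 6 ≤ l := by
    rw [hl, Nat.le_log_iff_pow_le (by norm_num) hv0]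
    simpa using h
  set m := l - 6 with hm
  have hpow : 0 < 2 ^ m := Nat.pow_pos (by norm_num)
  have hlow : 2 ^ l ≤ v := Nat.pow_log_le_self 2 hv0
  have hhigh : v < 2 ^ (l + 1) := Nat.lt_pow_succ_log_self (by norm_num) v
  have hlow' : 64 * 2 ^ m ≤ v := by
    calc 64 * 2 ^ m = 2 ^ (m + 6) := by rw [pow_add]; ring
    _ = 2 ^ l := by congr 1; omega
    _ ≤ v := hlow
  have hhigh' : v < 128 * 2 ^ m := by
    calc v < 2 ^ (l + 1) := hhigh
    _ = 128 * 2 ^ m := by rw [show l + 1 = m + 7 by omega, pow_add]; ring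
  set q := v / 2 ^ m with hq
  have hq1 : 64 ≤ q := (Nat.le_div_iff_mul_le hpow).2 hlow'
  have hq2 : q < 128 := by rw [hq, Nat.div_lt_iff_lt_mul hpow]; exact hhigh'
  set x := q - 64 with hx
  have hx64 : x < 64 := by omega
  obtain ⟨hs1, hs2⟩ := posOf_spec hx64
  set i := posOf x with hi
  have hi13 : i < 13 := by
    have : posOf x ≤ 12 := posOf_le x
    omega
  have hT : bIdx v = 13 * m + i := by rw [bIdx, ← hl, ← hm, ← hq, ← hx, ← hi]
  rw [hT]
  have hdiv : (13 * m + i) / 13 = m := by omega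
  have hmod : (13 * m + i) % 13 = i := by omega
  constructor
  · rw [start, hdiv, hmod]
    calc (64 + Wt i) * 2 ^ m ≤ q * 2 ^ m := Nat.mul_le_mul_right _ (by omega)
    _ ≤ v := Nat.div_mul_le_self _ _
  · rw [start_succ, hdiv, hmod]
    have : v < (q + 1) * 2 ^ m := by
      have hmod' : v % 2 ^ m < 2 ^ m := Nat.mod_lt v hpow
      have hdm : 2 ^ m * q + v % 2 ^ m = v := Nat.div_add_mod v (2 ^ m)
      have hexp : (q + 1) * 2 ^ m = 2 ^ m * q + 2 ^ m := by ring
      linarith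
    calc v < (q + 1) * 2 ^ m := this
    _ ≤ (64 + Wt (i + 1)) * 2 ^ m := Nat.mul_le_mul_right _ (by omega)


def Dc (v : ℕ) : ℕ := ((Finset.Ico 1 v).filter (fun u => lam u < lam v)).card

lemma edgeCount_eq (n : ℕ) : edgeCount G n =
    (((Finset.Ico 1 (n + 1)) ×ˢ (Finset.Ico 1 (n + 1))).filter
      (fun p => p.1 < p.2 ∧ lam p.1 < lam p.2)).card := by
  rw [edgeCount, ← Set.ncard_coe_finset]
  congr 1
  ext ⟨a, b⟩
  simp only [Set.mem_setOf_eq, Finset.coe_filter, Finset.mem_product, Finset.mem_Ico]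
  constructor
  · rintro ⟨h1, h2, h3, h4⟩
    have hl : lam a < lam b := by
      rcases h4 with ⟨_, h⟩ | ⟨h, _⟩
      · exact h
      · omega
    exact ⟨⟨⟨h1, by omega⟩, by omega, by omega⟩, h2, hl⟩
  · rintro ⟨⟨⟨h1, h2⟩, h3, h4⟩, h5, h6⟩
    exact ⟨h1, h5, by omega, Or.inl ⟨h5, h6⟩⟩

lemma edgeCount_succ (n : ℕ) : edgeCount G (n + 1) = edgeCount G n + Dc (n + 1) := by
  rw [edgeCount_eq, edgeCount_eq]
  have key : (((Finset.Ico 1 (n + 2)) ×ˢ (Finset.Ico 1 (n + 2))).filter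
      (fun p => p.1 < p.2 ∧ lam p.1 < lam p.2))
      = (((Finset.Ico 1 (n + 1)) ×ˢ (Finset.Ico 1 (n + 1))).filter
        (fun p => p.1 < p.2 ∧ lam p.1 < lam p.2))
        ∪ ((Finset.Ico 1 (n + 1)).filter (fun u => lam u < lam (n + 1))).image
          (fun u => (u, n + 1)) := by
    ext ⟨a, b⟩
    simp only [Finset.mem_union, Finset.mem_filter, Finset.mem_product, Finset.mem_Ico,
      Finset.mem_image, Prod.mk.injEq]
    constructor
    · rintro ⟨⟨⟨ha1, ha2⟩, hb1, hb2⟩, hab, hlam⟩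
      by_cases hb : b = n + 1
      · subst hb
        exact Or.inr ⟨a, ⟨⟨ha1, by omega⟩, hlam⟩, rfl, rfl⟩
      · exact Or.inl ⟨⟨⟨ha1, by omega⟩, hb1, by omega⟩, hab, hlam⟩
    · rintro (⟨⟨⟨ha1, ha2⟩, hb1, hb2⟩, hab, hlam⟩ | ⟨u, ⟨⟨hu1, hu2⟩, hlam⟩, hua, hub⟩)
      · exact ⟨⟨⟨ha1, by omega⟩, hb1, by omega⟩, hab, hlam⟩
      · subst hua; subst hub
        exact ⟨⟨⟨hu1, by omega⟩, by omega, by omega⟩, by omega, hlam⟩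
  have hdj : Disjoint (((Finset.Ico 1 (n + 1)) ×ˢ (Finset.Ico 1 (n + 1))).filter
      (fun p => p.1 < p.2 ∧ lam p.1 < lam p.2))
      (((Finset.Ico 1 (n + 1)).filter (fun u => lam u < lam (n + 1))).image
        (fun u => (u, n + 1))) := by
    rw [Finset.disjoint_left]
    rintro ⟨a, b⟩ hp hq
    simp only [Finset.mem_filter, Finset.mem_product, Finset.mem_Ico] at hp
    simp only [Finset.mem_image, Finset.mem_filter, Finset.mem_Ico, Prod.mk.injEq] at hq
    obtain ⟨u, _, _, hub⟩ := hq
    omega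
  have hinj : Function.Injective (fun u : ℕ => (u, n + 1)) := by
    intro x y h
    injection h
  rw [key, Finset.card_union_of_disjoint hdj, Finset.card_image_of_injective _ hinj]
  rfl

lemma edgeCount_zero : edgeCount G 0 = 0 := by
  simp [edgeCount_eq]

lemma Dc_ge {v t : ℕ} (h1 : start t ≤ v) (h2 : v < start (t + 1)) :
    ∑ s ∈ (Finset.range t).filter (fun s => piv (s % 13) < piv (t % 13)),
      (start (s + 1) - start s) ≤ Dc v := by
  classical
  set Ft := (Finset.range t).filter (fun s => piv (s % 13) < piv (t % 13)) with hFt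
  have hlamv : lam v = piv (t % 13) := (block_mem h1 h2).2
  have hdisj : ∀ s1 ∈ Ft, ∀ s2 ∈ Ft, s1 ≠ s2 →
      Disjoint (Finset.Ico (start s1) (start (s1 + 1))) (Finset.Ico (start s2) (start (s2 + 1))) := by
    intro s1 _ s2 _ hne
    rw [Finset.disjoint_left]
    intro u hu1 hu2
    simp only [Finset.mem_Ico] at hu1 hu2
    rcases Nat.lt_or_ge s1 s2 with h | h
    · have : start (s1 + 1) ≤ start s2 := start_mono.le_iff_le.2 (by omega)
      omega
    · have : start (s2 + 1) ≤ start s1 := start_mono.le_iff_le.2 (by omega)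
      omega
  have hsub : Ft.biUnion (fun s => Finset.Ico (start s) (start (s + 1)))
      ⊆ (Finset.Ico 1 v).filter (fun u => lam u < lam v) := by
    intro u hu
    simp only [Finset.mem_biUnion, Finset.mem_Ico, hFt, Finset.mem_filter,
      Finset.mem_range] at hu
    obtain ⟨s, ⟨hst, hpi⟩, hu1, hu2⟩ := hu
    have h64 := start_ge s
    have hlt : u < v := by
      have : start (s + 1) ≤ start t := start_mono.le_iff_le.2 (by omega)
      omega
    have hlamu : lam u = piv (s % 13) := (block_mem hu1 hu2).2
    simp only [Finset.mem_filter, Finset.mem_Ico]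
    exact ⟨⟨by omega, hlt⟩, by rw [hlamu, hlamv]; exact hpi⟩
  calc ∑ s ∈ Ft, (start (s + 1) - start s)
      = ∑ s ∈ Ft, (Finset.Ico (start s) (start (s + 1))).card := by
        apply Finset.sum_congr rfl; intro s _; rw [Nat.card_Ico]
    _ = (Ft.biUnion (fun s => Finset.Ico (start s) (start (s + 1)))).card :=
        (Finset.card_biUnion hdisj).symm
    _ ≤ Dc v := Finset.card_le_card hsub

def qq (L : ℕ) : ℕ := ∑ j ∈ Finset.range 13, if piv j < L then (Wt (j + 1) - Wt j) else 0

lemma sum_range_add' (f : ℕ → ℕ) (a b : ℕ) :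
    ∑ s ∈ Finset.range (a + b), f s
      = ∑ s ∈ Finset.range a, f s + ∑ k ∈ Finset.range b, f (a + k) := by
  induction b with
  | zero => simp
  | succ b ih =>
    rw [show a + (b + 1) = (a + b) + 1 by omega, Finset.sum_range_succ, ih,
      Finset.sum_range_succ, Nat.add_assoc]

lemma sz_eq (s : ℕ) :
    start (s + 1) - start s = (Wt (s % 13 + 1) - Wt (s % 13)) * 2 ^ (s / 13) := by
  rw [start_succ, start, Nat.add_mul, Nat.add_mul, Nat.add_sub_add_left, Nat.sub_mul]

lemma mod13 {m k : ℕ} (h : k < 13) : (13 * m + k) % 13 = k := by omega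
lemma div13 {m k : ℕ} (h : k < 13) : (13 * m + k) / 13 = m := by omega

lemma period_sum (L m : ℕ) :
    ∑ k ∈ Finset.range 13, (if piv ((13 * m + k) % 13) < L
      then start (13 * m + k + 1) - start (13 * m + k) else 0) = qq L * 2 ^ m := by
  rw [qq, Finset.sum_mul]
  apply Finset.sum_congr rfl
  intro k hk
  simp only [Finset.mem_range] at hk
  rw [mod13 hk, sz_eq, mod13 hk, div13 hk, ite_mul, zero_mul]

lemma prefix_sum (L m : ℕ) :
    ∑ s ∈ Finset.range (13 * m), (if piv (s % 13) < L then start (s + 1) - start s else 0)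
      = (2 ^ m - 1) * qq L := by
  induction m with
  | zero => simp
  | succ m ih =>
    rw [show 13 * (m + 1) = 13 * m + 13 by ring, sum_range_add', ih, period_sum]
    have h1 : (1 : ℕ) ≤ 2 ^ m := Nat.one_le_two_pow
    have h2 : (1 : ℕ) ≤ 2 ^ (m + 1) := Nat.one_le_two_pow
    have h3 : (2 : ℕ) ^ (m + 1) = 2 * 2 ^ m := by rw [pow_succ]; ring
    zify [h1, h2]
    rw [pow_succ]
    ring

lemma sum_eval' (m i : ℕ) (hi : i < 13) :
    ∑ s ∈ Finset.range (13 * m + i), (if piv (s % 13) < piv i then start (s + 1) - start s else 0)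
      = (2 ^ m - 1) * Qt i + 2 ^ m * Pt i := by
  rw [sum_range_add', prefix_sum (piv i) m]
  have hmid : ∑ k ∈ Finset.range i, (if piv ((13 * m + k) % 13) < piv i
      then start (13 * m + k + 1) - start (13 * m + k) else 0) = Pt i * 2 ^ m := by
    have step : ∀ k ∈ Finset.range i, (if piv ((13 * m + k) % 13) < piv i
        then start (13 * m + k + 1) - start (13 * m + k) else 0)
        = (if piv k < piv i then (Wt (k + 1) - Wt k) else 0) * 2 ^ m := by
      intro k hk
      simp only [Finset.mem_range] at hk
      have hk13 : k < 13 := by omega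
      rw [mod13 hk13, sz_eq, mod13 hk13, div13 hk13, ite_mul, zero_mul]
    rw [Finset.sum_congr rfl step, ← Finset.sum_mul]
    congr 1
    interval_cases i <;> decide
  rw [hmid]
  have hq : qq (piv i) = Qt i := by interval_cases i <;> decide
  rw [hq, Nat.mul_comm (Pt i) (2 ^ m)]

lemma sum_eval (t : ℕ) :
    ∑ s ∈ (Finset.range t).filter (fun s => piv (s % 13) < piv (t % 13)),
      (start (s + 1) - start s) = dbt t := by
  have h : 13 * (t / 13) + t % 13 = t := Nat.div_add_mod t 13
  have h2 := sum_eval' (t / 13) (t % 13) (Nat.mod_lt _ (by norm_num))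
  rw [h] at h2
  rw [Finset.sum_filter, h2]
  rfl

def EfL : ℕ → ℕ
  | 0 => 0
  | t + 1 => EfL t + (start (t + 1) - start t) * dbt t

def dbv (v : ℕ) : ℕ := if v < 64 then 0 else dbt (bIdx v)

def psi (n : ℕ) : ℕ := ∑ v ∈ Finset.range (n + 1), dbv v

lemma dbv_le_Dc (v : ℕ) : dbv v ≤ Dc v := by
  unfold dbv
  split_ifs with h
  · exact Nat.zero_le _
  · push_neg at h
    obtain ⟨h1, h2⟩ := exists_block h
    calc dbt (bIdx v) = _ := (sum_eval (bIdx v)).symm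
    _ ≤ Dc v := Dc_ge h1 h2

lemma psi_le (n : ℕ) : psi n ≤ edgeCount G n := by
  induction n with
  | zero =>
    have : psi 0 = 0 := by simp [psi, dbv]
    omega
  | succ n ih =>
    have hp : psi (n + 1) = psi n + dbv (n + 1) := Finset.sum_range_succ _ _
    rw [hp, edgeCount_succ]
    exact Nat.add_le_add ih (dbv_le_Dc _)

lemma dbv_eq {v t : ℕ} (h1 : start t ≤ v) (h2 : v < start (t + 1)) : dbv v = dbt t := by
  have h64 := start_ge t
  rw [dbv, if_neg (by omega), (block_mem h1 h2).1]

lemma psi_eval (n : ℕ) : ∀ t, start t ≤ n → n < start (t + 1) →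
    psi n = EfL t + (n + 1 - start t) * dbt t := by
  induction n using Nat.strong_induction_on with
  | _ n ih =>
    intro t h1 h2
    have h64 : 64 ≤ start t := start_ge t
    rcases Nat.lt_or_ge (start t) n with hlt | hge
    · -- interior of block
      have hn1 : n - 1 < n := by omega
      have ihn := ih (n - 1) hn1 t (by omega) (by omega)
      have hp : psi n = psi (n - 1) + dbv n := by
        rw [psi, psi, show n - 1 + 1 = n by omega, Finset.sum_range_succ]
      rw [hp, ihn, dbv_eq h1 h2]
      have hk : n + 1 - start t = (n - 1 + 1 - start t) + 1 := by omega
      rw [hk, Nat.add_mul, Nat.one_mul, Nat.add_assoc]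
    · -- n = start t
      have hn : n = start t := by omega
      rcases t with _ | t'
      · -- t = 0, n = 64
        have h640 : start 0 = 64 := by norm_num [start, Wt]
        have h641 : start 1 = 69 := by norm_num [start, Wt]
        have hn64 : n = 64 := by omega
        have hz : ∑ v ∈ Finset.range 64, dbv v = 0 := by
          apply Finset.sum_eq_zero
          intro v hv
          simp only [Finset.mem_range] at hv
          rw [dbv, if_pos hv]
        have hps : psi 64 = dbv 64 := by
          rw [psi, Finset.sum_range_succ, hz, Nat.zero_add]
        have hd : dbv 64 = dbt 0 := dbv_eq (t := 0) (by omega) (by omega)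
        rw [hn64, h640, hps, hd]
        simp [EfL]
      · -- t = t' + 1
        have hlt' : start t' < start (t' + 1) := start_lt t'
        have hn' : n = start (t' + 1) := hn
        have hA : start t' ≤ n - 1 := by omega
        have hB : n - 1 < start (t' + 1) := by omega
        have ihn := ih (n - 1) (by omega) t' hA hB
        have hp : psi n = psi (n - 1) + dbv n := by
          rw [psi, psi, show n - 1 + 1 = n by omega, Finset.sum_range_succ]
        have hy2 : n - 1 + 1 - start t' = start (t' + 1) - start t' := by omega
        rw [hy2] at ihn
        have hdd : dbv n = dbt (t' + 1) := dbv_eq h1 h2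
        have hone : n + 1 - start (t' + 1) = 1 := by omega
        rw [hp, ihn, hdd, hone, Nat.one_mul]
        show EfL t' + (start (t' + 1) - start t') * dbt t' + dbt (t' + 1)
          = EfL (t' + 1) + dbt (t' + 1)
        rfl

lemma keyIneq0 (X y : ℤ) (hX : 1 ≤ X) (hy : 0 ≤ y) (hyY : y ≤ 5 * X - 1) :
    173793 * (64 * X + y) ^ 2 ≤ 249696 * (2870 * X ^ 2 - 5664 * X + 2794
      + 3 * (y + 1) * (34 * X - 34)) + 22472640 * (64 * X + y) := by
  have hA : (0:ℤ) ≤ 4771392 * X ^ 2 + (49439808) * X + 672181632 := by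
    nlinarith [sq_nonneg (9542784 * X + (49439808)), sq_nonneg X]
  have hE : (0:ℤ) ≤ 16544007 * X ^ 2 + (32972490) * X + 675004191 := by
    nlinarith [sq_nonneg (33088014 * X + (32972490)), sq_nonneg X]
  have hY : (0:ℤ) ≤ 5 * X - 1 - y := by linarith
  have hY0 : (0:ℤ) ≤ 5 * X - 1 := by linarith
  nlinarith [mul_nonneg hY hA, mul_nonneg hy hE, mul_nonneg (mul_nonneg hy hY) hY0]

lemma keyIneq1 (X y : ℤ) (hX : 1 ≤ X) (hy : 0 ≤ y) (hyY : y ≤ 5 * X - 1) :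
    173793 * (69 * X + y) ^ 2 ≤ 249696 * (3380 * X ^ 2 - 6174 * X + 2794
      + 3 * (y + 1) * (44 * X - 39)) + 22472640 * (69 * X + y) := by
  have hA : (0:ℤ) ≤ 16544007 * X ^ 2 + (41948928) * X + 668436192 := by
    nlinarith [sq_nonneg (33088014 * X + (41948928)), sq_nonneg X]
  have hE : (0:ℤ) ≤ 57081372 * X ^ 2 + (1001460) * X + 675004191 := by
    nlinarith [sq_nonneg (114162744 * X + (1001460)), sq_nonneg X]
  have hY : (0:ℤ) ≤ 5 * X - 1 - y := by linarith
  have hY0 : (0:ℤ) ≤ 5 * X - 1 := by linarith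
  nlinarith [mul_nonneg hY hA, mul_nonneg hy hE, mul_nonneg (mul_nonneg hy hY) hY0]

lemma keyIneq2 (X y : ℤ) (hX : 1 ≤ X) (hy : 0 ≤ y) (hyY : y ≤ 5 * X - 1) :
    173793 * (74 * X + y) ^ 2 ≤ 249696 * (4040 * X ^ 2 - 6759 * X + 2794
      + 3 * (y + 1) * (54 * X - 44)) + 22472640 * (74 * X + y) := by
  have hA : (0:ℤ) ≤ 57081372 * X ^ 2 + (15730848) * X + 664690752 := by
    nlinarith [sq_nonneg (114162744 * X + (15730848)), sq_nonneg X]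
  have hE : (0:ℤ) ≤ 126383487 * X ^ 2 + (-49696770) * X + 675004191 := by
    nlinarith [sq_nonneg (252766974 * X + (-49696770)), sq_nonneg X]
  have hY : (0:ℤ) ≤ 5 * X - 1 - y := by linarith
  have hY0 : (0:ℤ) ≤ 5 * X - 1 := by linarith
  nlinarith [mul_nonneg hY hA, mul_nonneg hy hE, mul_nonneg (mul_nonneg hy hY) hY0]

lemma keyIneq3 (X y : ℤ) (hX : 1 ≤ X) (hy : 0 ≤ y) (hyY : y ≤ 4 * X - 1) :
    173793 * (79 * X + y) ^ 2 ≤ 249696 * (4850 * X ^ 2 - 7419 * X + 2794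
      + 3 * (y + 1) * (0 * X - 0)) + 22472640 * (79 * X + y) := by
  have hA : (0:ℤ) ≤ 126383487 * X ^ 2 + (-77156064) * X + 697650624 := by
    nlinarith [sq_nonneg (252766974 * X + (-77156064)), sq_nonneg X]
  have hE : (0:ℤ) ≤ 13765623 * X ^ 2 + (41584134) * X + 675004191 := by
    nlinarith [sq_nonneg (27531246 * X + (41584134)), sq_nonneg X]
  have hY : (0:ℤ) ≤ 4 * X - 1 - y := by linarith
  have hY0 : (0:ℤ) ≤ 4 * X - 1 := by linarith
  nlinarith [mul_nonneg hY hA, mul_nonneg hy hE, mul_nonneg (mul_nonneg hy hY) hY0]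

lemma keyIneq4 (X y : ℤ) (hX : 1 ≤ X) (hy : 0 ≤ y) (hyY : y ≤ 4 * X - 1) :
    173793 * (83 * X + y) ^ 2 ≤ 249696 * (4850 * X ^ 2 - 7419 * X + 2794
      + 3 * (y + 1) * (73 * X - 54)) + 22472640 * (83 * X + y) := by
  have hA : (0:ℤ) ≤ 13765623 * X ^ 2 + (67417920) * X + 657199872 := by
    nlinarith [sq_nonneg (27531246 * X + (67417920)), sq_nonneg X]
  have hE : (0:ℤ) ≤ 114320079 * X ^ 2 + (-28937970) * X + 675004191 := by
    nlinarith [sq_nonneg (228640158 * X + (-28937970)), sq_nonneg X]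
  have hY : (0:ℤ) ≤ 4 * X - 1 - y := by linarith
  have hY0 : (0:ℤ) ≤ 4 * X - 1 := by linarith
  nlinarith [mul_nonneg hY hA, mul_nonneg hy hE, mul_nonneg (mul_nonneg hy hY) hY0]

lemma keyIneq5 (X y : ℤ) (hX : 1 ≤ X) (hy : 0 ≤ y) (hyY : y ≤ 4 * X - 1) :
    173793 * (87 * X + y) ^ 2 ≤ 249696 * (5726 * X ^ 2 - 8067 * X + 2794
      + 3 * (y + 1) * (8 * X - 4)) + 22472640 * (87 * X + y) := by
  have hA : (0:ℤ) ≤ 114320079 * X ^ 2 + (-53185248) * X + 694654272 := by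
    nlinarith [sq_nonneg (228640158 * X + (-53185248)), sq_nonneg X]
  have hE : (0:ℤ) ≤ 14550279 * X ^ 2 + (50357526) * X + 675004191 := by
    nlinarith [sq_nonneg (29100558 * X + (50357526)), sq_nonneg X]
  have hY : (0:ℤ) ≤ 4 * X - 1 - y := by linarith
  have hY0 : (0:ℤ) ≤ 4 * X - 1 := by linarith
  nlinarith [mul_nonneg hY hA, mul_nonneg hy hE, mul_nonneg (mul_nonneg hy hY) hY0]

lemma keyIneq6 (X y : ℤ) (hX : 1 ≤ X) (hy : 0 ≤ y) (hyY : y ≤ 5 * X - 1) :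
    173793 * (91 * X + y) ^ 2 ≤ 249696 * (5822 * X ^ 2 - 8115 * X + 2794
      + 3 * (y + 1) * (72 * X - 49)) + 22472640 * (91 * X + y) := by
  have hA : (0:ℤ) ≤ 14550279 * X ^ 2 + (72661536) * X + 660945312 := by
    nlinarith [sq_nonneg (29100558 * X + (72661536)), sq_nonneg X]
  have hE : (0:ℤ) ≤ 121725504 * X ^ 2 + (-19067904) * X + 675004191 := by
    nlinarith [sq_nonneg (243451008 * X + (-19067904)), sq_nonneg X]
  have hY : (0:ℤ) ≤ 5 * X - 1 - y := by linarith
  have hY0 : (0:ℤ) ≤ 5 * X - 1 := by linarith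
  nlinarith [mul_nonneg hY hA, mul_nonneg hy hE, mul_nonneg (mul_nonneg hy hY) hY0]

lemma keyIneq7 (X y : ℤ) (hX : 1 ≤ X) (hy : 0 ≤ y) (hyY : y ≤ 5 * X - 1) :
    173793 * (96 * X + y) ^ 2 ≤ 249696 * (6902 * X ^ 2 - 8850 * X + 2794
      + 3 * (y + 1) * (16 * X - 8)) + 22472640 * (96 * X + y) := by
  have hA : (0:ℤ) ≤ 121725504 * X ^ 2 + (-40450752) * X + 691657920 := by
    nlinarith [sq_nonneg (243451008 * X + (-40450752)), sq_nonneg X]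
  have hE : (0:ℤ) ≤ 10466439 * X ^ 2 + (65069706) * X + 675004191 := by
    nlinarith [sq_nonneg (20932878 * X + (65069706)), sq_nonneg X]
  have hY : (0:ℤ) ≤ 5 * X - 1 - y := by linarith
  have hY0 : (0:ℤ) ≤ 5 * X - 1 := by linarith
  nlinarith [mul_nonneg hY hA, mul_nonneg hy hE, mul_nonneg (mul_nonneg hy hY) hY0]

lemma keyIneq8 (X y : ℤ) (hX : 1 ≤ X) (hy : 0 ≤ y) (hyY : y ≤ 6 * X - 1) :
    173793 * (101 * X + y) ^ 2 ≤ 249696 * (7142 * X ^ 2 - 8970 * X + 2794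
      + 3 * (y + 1) * (95 * X - 58)) + 22472640 * (101 * X + y) := by
  have hA : (0:ℤ) ≤ 10466439 * X ^ 2 + (101126880) * X + 654203520 := by
    nlinarith [sq_nonneg (20932878 * X + (101126880)), sq_nonneg X]
  have hE : (0:ℤ) ≤ 220552935 * X ^ 2 + (-58691562) * X + 675004191 := by
    nlinarith [sq_nonneg (441105870 * X + (-58691562)), sq_nonneg X]
  have hY : (0:ℤ) ≤ 6 * X - 1 - y := by linarith
  have hY0 : (0:ℤ) ≤ 6 * X - 1 := by linarith
  nlinarith [mul_nonneg hY hA, mul_nonneg hy hE, mul_nonneg (mul_nonneg hy hY) hY0]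

lemma keyIneq9 (X y : ℤ) (hX : 1 ≤ X) (hy : 0 ≤ y) (hyY : y ≤ 5 * X - 1) :
    173793 * (107 * X + y) ^ 2 ≤ 249696 * (8852 * X ^ 2 - 10014 * X + 2794
      + 3 * (y + 1) * (26 * X - 13)) + 22472640 * (107 * X + y) := by
  have hA : (0:ℤ) ≤ 220552935 * X ^ 2 + (-76406976) * X + 687912480 := by
    nlinarith [sq_nonneg (441105870 * X + (-76406976)), sq_nonneg X]
  have hE : (0:ℤ) ≤ 127631040 * X ^ 2 + (6718848) * X + 675004191 := by
    nlinarith [sq_nonneg (255262080 * X + (6718848)), sq_nonneg X]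
  have hY : (0:ℤ) ≤ 5 * X - 1 - y := by linarith
  have hY0 : (0:ℤ) ≤ 5 * X - 1 := by linarith
  nlinarith [mul_nonneg hY hA, mul_nonneg hy hE, mul_nonneg (mul_nonneg hy hY) hY0]

lemma keyIneq10 (X y : ℤ) (hX : 1 ≤ X) (hy : 0 ≤ y) (hyY : y ≤ 5 * X - 1) :
    173793 * (112 * X + y) ^ 2 ≤ 249696 * (9242 * X ^ 2 - 10209 * X + 2794
      + 3 * (y + 1) * (36 * X - 18)) + 22472640 * (112 * X + y) := by
  have hA : (0:ℤ) ≤ 127631040 * X ^ 2 + (-5243616) * X + 684167040 := by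
    nlinarith [sq_nonneg (255262080 * X + (-5243616)), sq_nonneg X]
  have hE : (0:ℤ) ≤ 63473895 * X ^ 2 + (53402058) * X + 675004191 := by
    nlinarith [sq_nonneg (126947790 * X + (53402058)), sq_nonneg X]
  have hY : (0:ℤ) ≤ 5 * X - 1 - y := by linarith
  have hY0 : (0:ℤ) ≤ 5 * X - 1 := by linarith
  nlinarith [mul_nonneg hY hA, mul_nonneg hy hE, mul_nonneg (mul_nonneg hy hY) hY0]

lemma keyIneq11 (X y : ℤ) (hX : 1 ≤ X) (hy : 0 ≤ y) (hyY : y ≤ 6 * X - 1) :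
    173793 * (117 * X + y) ^ 2 ≤ 249696 * (9782 * X ^ 2 - 10479 * X + 2794
      + 3 * (y + 1) * (46 * X - 23)) + 22472640 * (117 * X + y) := by
  have hA : (0:ℤ) ≤ 63473895 * X ^ 2 + (47192544) * X + 680421600 := by
    nlinarith [sq_nonneg (126947790 * X + (47192544)), sq_nonneg X]
  have hE : (0:ℤ) ≤ 19960263 * X ^ 2 + (86949270) * X + 675004191 := by
    nlinarith [sq_nonneg (39920526 * X + (86949270)), sq_nonneg X]
  have hY : (0:ℤ) ≤ 6 * X - 1 - y := by linarith
  have hY0 : (0:ℤ) ≤ 6 * X - 1 := by linarith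
  nlinarith [mul_nonneg hY hA, mul_nonneg hy hE, mul_nonneg (mul_nonneg hy hY) hY0]

lemma keyIneq12 (X y : ℤ) (hX : 1 ≤ X) (hy : 0 ≤ y) (hyY : y ≤ 5 * X - 1) :
    173793 * (123 * X + y) ^ 2 ≤ 249696 * (10610 * X ^ 2 - 10893 * X + 2794
      + 3 * (y + 1) * (58 * X - 29)) + 22472640 * (123 * X + y) := by
  have hA : (0:ℤ) ≤ 19960263 * X ^ 2 + (87643296) * X + 675927072 := by
    nlinarith [sq_nonneg (39920526 * X + (87643296)), sq_nonneg X]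
  have hE : (0:ℤ) ≤ 19085568 * X ^ 2 + (92432640) * X + 675004191 := by
    nlinarith [sq_nonneg (38171136 * X + (92432640)), sq_nonneg X]
  have hY : (0:ℤ) ≤ 5 * X - 1 - y := by linarith
  have hY0 : (0:ℤ) ≤ 5 * X - 1 := by linarith
  nlinarith [mul_nonneg hY hA, mul_nonneg hy hE, mul_nonneg (mul_nonneg hy hY) hY0]


lemma term_eq (m k : ℕ) (hk : k < 13) :
    (start (13 * m + k + 1) - start (13 * m + k)) * dbt (13 * m + k)
      = (Wt (k + 1) - Wt k) * 2 ^ m * ((2 ^ m - 1) * Qt k + 2 ^ m * Pt k) := by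
  simp only [dbt]
  rw [sz_eq, mod13 hk, div13 hk]

lemma EfL_sum (T : ℕ) : EfL T = ∑ t ∈ Finset.range T, (start (t + 1) - start t) * dbt t := by
  induction T with
  | zero => rfl
  | succ T ih => rw [Finset.sum_range_succ, ← ih]; rfl

lemma EfL_split (m i : ℕ) : EfL (13 * m + i) = EfL (13 * m)
    + ∑ k ∈ Finset.range i, (start (13 * m + k + 1) - start (13 * m + k)) * dbt (13 * m + k) := by
  rw [EfL_sum, EfL_sum, sum_range_add']

lemma EfL_period (m : ℕ) : EfL (13 * m + 13) + 1888 * 2 ^ m = EfL (13 * m) + 2870 * 4 ^ m := by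
  have hX1 : (1 : ℕ) ≤ 2 ^ m := Nat.one_le_two_pow
  rw [EfL_split m 13]
  simp only [Finset.sum_range_succ, Finset.sum_range_zero]
  rw [term_eq m 0 (by norm_num), term_eq m 1 (by norm_num), term_eq m 2 (by norm_num), term_eq m 3 (by norm_num), term_eq m 4 (by norm_num), term_eq m 5 (by norm_num), term_eq m 6 (by norm_num), term_eq m 7 (by norm_num), term_eq m 8 (by norm_num), term_eq m 9 (by norm_num), term_eq m 10 (by norm_num), term_eq m 11 (by norm_num), term_eq m 12 (by norm_num)]
  norm_num [Wt, Qt, Pt]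
  zify [hX1]
  rw [show ((4:ℤ)) ^ m = 2 ^ m * 2 ^ m by rw [show (4:ℤ) = 2 * 2 by norm_num, mul_pow]]
  ring

lemma EfL_closed (m : ℕ) : 3 * EfL (13 * m) + 2870 + 5664 * 2 ^ m = 2870 * 4 ^ m + 5664 := by
  induction m with
  | zero => simp [EfL]
  | succ m ih =>
    have hp := EfL_period m
    have e2 : (2:ℕ) ^ (m + 1) = 2 * 2 ^ m := by rw [pow_succ]; ring
    have e4 : (4:ℕ) ^ (m + 1) = 4 * 4 ^ m := by rw [pow_succ]; ring
    rw [show 13 * (m + 1) = 13 * m + 13 by ring, e2, e4]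
    linarith

lemma case0 (n m : ℕ) (h1 : start (13 * m) ≤ n) (h2 : n < start (13 * m + 1))
    (hpsi : psi n = EfL (13 * m)
      + ∑ k ∈ Finset.range 0, (start (13 * m + k + 1) - start (13 * m + k)) * dbt (13 * m + k)
      + (n + 1 - start (13 * m)) * dbt (13 * m)) :
    57931 * n ^ 2 ≤ 249696 * psi n + 7490880 * n := by
  have hE3 := EfL_closed m
  have hX1 : (1 : ℕ) ≤ 2 ^ m := Nat.one_le_two_pow
  have hX1Z : (1 : ℤ) ≤ 2 ^ m := by exact_mod_cast hX1
  have h4 : ((4:ℤ)) ^ m = 2 ^ m * 2 ^ m := by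
    rw [show (4:ℤ) = 2 * 2 by norm_num, mul_pow]
  have em : (13 * m) % 13 = 0 := by omega
  have ed : (13 * m) / 13 = m := by omega
  have hstart : start (13 * m) = 64 * 2 ^ m := by
    rw [start, em, ed]; norm_num [Wt]
  have hstart1 : start (13 * m + 1) = 69 * 2 ^ m := by
    rw [start_succ, em, ed]; norm_num [Wt]
  have hdbt : dbt (13 * m) = (2 ^ m - 1) * 34 + 2 ^ m * 0 := by
    simp only [dbt]; rw [em, ed]; norm_num [Qt, Pt]
  simp only [Finset.sum_range_zero] at hpsi
  rw [hstart, hdbt] at hpsi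
  rw [hstart] at h1
  rw [hstart1] at h2
  have hb : 64 * 2 ^ m ≤ n + 1 := le_trans h1 (Nat.le_succ n)
  have hy0 : (0:ℤ) ≤ (n:ℤ) - 64 * 2 ^ m := by
    have : (64 * 2 ^ m : ℤ) ≤ n := by exact_mod_cast h1
    linarith
  have hyY : (n:ℤ) - 64 * 2 ^ m ≤ 5 * 2 ^ m - 1 := by
    have : (n:ℤ) < 69 * 2 ^ m := by exact_mod_cast h2
    linarith
  have hkey := keyIneq0 ((2:ℤ) ^ m) ((n:ℤ) - 64 * 2 ^ m) hX1Z hy0 hyY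
  zify [hX1, hb] at hpsi
  zify at hE3 ⊢
  nlinarith [hkey, hpsi, hE3, h4]

lemma case1 (n m : ℕ) (h1 : start (13 * m + 1) ≤ n) (h2 : n < start (13 * m + 1 + 1))
    (hpsi : psi n = EfL (13 * m)
      + ∑ k ∈ Finset.range 1, (start (13 * m + k + 1) - start (13 * m + k)) * dbt (13 * m + k)
      + (n + 1 - start (13 * m + 1)) * dbt (13 * m + 1)) :
    57931 * n ^ 2 ≤ 249696 * psi n + 7490880 * n := by
  have hE3 := EfL_closed m
  have hX1 : (1 : ℕ) ≤ 2 ^ m := Nat.one_le_two_pow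
  have hX1Z : (1 : ℤ) ≤ 2 ^ m := by exact_mod_cast hX1
  have h4 : ((4:ℤ)) ^ m = 2 ^ m * 2 ^ m := by
    rw [show (4:ℤ) = 2 * 2 by norm_num, mul_pow]
  have em : (13 * m + 1) % 13 = 1 := by omega
  have ed : (13 * m + 1) / 13 = m := by omega
  have hstart : start (13 * m + 1) = 69 * 2 ^ m := by
    rw [start, em, ed]; norm_num [Wt]
  have hstart1 : start (13 * m + 1 + 1) = 74 * 2 ^ m := by
    rw [start_succ, em, ed]; norm_num [Wt]
  have hdbt : dbt (13 * m + 1) = (2 ^ m - 1) * 39 + 2 ^ m * 5 := by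
    simp only [dbt]; rw [em, ed]; norm_num [Qt, Pt]
  simp only [Finset.sum_range_succ, Finset.sum_range_zero] at hpsi
  rw [term_eq m 0 (by norm_num)] at hpsi
  norm_num [Wt, Qt, Pt] at hpsi
  rw [hstart, hdbt] at hpsi
  rw [hstart] at h1
  rw [hstart1] at h2
  have hb : 69 * 2 ^ m ≤ n + 1 := le_trans h1 (Nat.le_succ n)
  have hy0 : (0:ℤ) ≤ (n:ℤ) - 69 * 2 ^ m := by
    have : (69 * 2 ^ m : ℤ) ≤ n := by exact_mod_cast h1
    linarith
  have hyY : (n:ℤ) - 69 * 2 ^ m ≤ 5 * 2 ^ m - 1 := by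
    have : (n:ℤ) < 74 * 2 ^ m := by exact_mod_cast h2
    linarith
  have hkey := keyIneq1 ((2:ℤ) ^ m) ((n:ℤ) - 69 * 2 ^ m) hX1Z hy0 hyY
  zify [hX1, hb] at hpsi
  zify at hE3 ⊢
  nlinarith [hkey, hpsi, hE3, h4]

lemma case2 (n m : ℕ) (h1 : start (13 * m + 2) ≤ n) (h2 : n < start (13 * m + 2 + 1))
    (hpsi : psi n = EfL (13 * m)
      + ∑ k ∈ Finset.range 2, (start (13 * m + k + 1) - start (13 * m + k)) * dbt (13 * m + k)
      + (n + 1 - start (13 * m + 2)) * dbt (13 * m + 2)) :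
    57931 * n ^ 2 ≤ 249696 * psi n + 7490880 * n := by
  have hE3 := EfL_closed m
  have hX1 : (1 : ℕ) ≤ 2 ^ m := Nat.one_le_two_pow
  have hX1Z : (1 : ℤ) ≤ 2 ^ m := by exact_mod_cast hX1
  have h4 : ((4:ℤ)) ^ m = 2 ^ m * 2 ^ m := by
    rw [show (4:ℤ) = 2 * 2 by norm_num, mul_pow]
  have em : (13 * m + 2) % 13 = 2 := by omega
  have ed : (13 * m + 2) / 13 = m := by omega
  have hstart : start (13 * m + 2) = 74 * 2 ^ m := by
    rw [start, em, ed]; norm_num [Wt]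
  have hstart1 : start (13 * m + 2 + 1) = 79 * 2 ^ m := by
    rw [start_succ, em, ed]; norm_num [Wt]
  have hdbt : dbt (13 * m + 2) = (2 ^ m - 1) * 44 + 2 ^ m * 10 := by
    simp only [dbt]; rw [em, ed]; norm_num [Qt, Pt]
  simp only [Finset.sum_range_succ, Finset.sum_range_zero] at hpsi
  rw [term_eq m 0 (by norm_num), term_eq m 1 (by norm_num)] at hpsi
  norm_num [Wt, Qt, Pt] at hpsi
  rw [hstart, hdbt] at hpsi
  rw [hstart] at h1
  rw [hstart1] at h2
  have hb : 74 * 2 ^ m ≤ n + 1 := le_trans h1 (Nat.le_succ n)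
  have hy0 : (0:ℤ) ≤ (n:ℤ) - 74 * 2 ^ m := by
    have : (74 * 2 ^ m : ℤ) ≤ n := by exact_mod_cast h1
    linarith
  have hyY : (n:ℤ) - 74 * 2 ^ m ≤ 5 * 2 ^ m - 1 := by
    have : (n:ℤ) < 79 * 2 ^ m := by exact_mod_cast h2
    linarith
  have hkey := keyIneq2 ((2:ℤ) ^ m) ((n:ℤ) - 74 * 2 ^ m) hX1Z hy0 hyY
  zify [hX1, hb] at hpsi
  zify at hE3 ⊢
  nlinarith [hkey, hpsi, hE3, h4]

lemma case3 (n m : ℕ) (h1 : start (13 * m + 3) ≤ n) (h2 : n < start (13 * m + 3 + 1))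
    (hpsi : psi n = EfL (13 * m)
      + ∑ k ∈ Finset.range 3, (start (13 * m + k + 1) - start (13 * m + k)) * dbt (13 * m + k)
      + (n + 1 - start (13 * m + 3)) * dbt (13 * m + 3)) :
    57931 * n ^ 2 ≤ 249696 * psi n + 7490880 * n := by
  have hE3 := EfL_closed m
  have hX1 : (1 : ℕ) ≤ 2 ^ m := Nat.one_le_two_pow
  have hX1Z : (1 : ℤ) ≤ 2 ^ m := by exact_mod_cast hX1
  have h4 : ((4:ℤ)) ^ m = 2 ^ m * 2 ^ m := by
    rw [show (4:ℤ) = 2 * 2 by norm_num, mul_pow]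
  have em : (13 * m + 3) % 13 = 3 := by omega
  have ed : (13 * m + 3) / 13 = m := by omega
  have hstart : start (13 * m + 3) = 79 * 2 ^ m := by
    rw [start, em, ed]; norm_num [Wt]
  have hstart1 : start (13 * m + 3 + 1) = 83 * 2 ^ m := by
    rw [start_succ, em, ed]; norm_num [Wt]
  have hdbt : dbt (13 * m + 3) = (2 ^ m - 1) * 0 + 2 ^ m * 0 := by
    simp only [dbt]; rw [em, ed]; norm_num [Qt, Pt]
  simp only [Finset.sum_range_succ, Finset.sum_range_zero] at hpsi
  rw [term_eq m 0 (by norm_num), term_eq m 1 (by norm_num), term_eq m 2 (by norm_num)] at hpsi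
  norm_num [Wt, Qt, Pt] at hpsi
  rw [hstart, hdbt] at hpsi
  rw [hstart] at h1
  rw [hstart1] at h2
  have hb : 79 * 2 ^ m ≤ n + 1 := le_trans h1 (Nat.le_succ n)
  have hy0 : (0:ℤ) ≤ (n:ℤ) - 79 * 2 ^ m := by
    have : (79 * 2 ^ m : ℤ) ≤ n := by exact_mod_cast h1
    linarith
  have hyY : (n:ℤ) - 79 * 2 ^ m ≤ 4 * 2 ^ m - 1 := by
    have : (n:ℤ) < 83 * 2 ^ m := by exact_mod_cast h2
    linarith
  have hkey := keyIneq3 ((2:ℤ) ^ m) ((n:ℤ) - 79 * 2 ^ m) hX1Z hy0 hyY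
  zify [hX1, hb] at hpsi
  zify at hE3 ⊢
  nlinarith [hkey, hpsi, hE3, h4]

lemma case4 (n m : ℕ) (h1 : start (13 * m + 4) ≤ n) (h2 : n < start (13 * m + 4 + 1))
    (hpsi : psi n = EfL (13 * m)
      + ∑ k ∈ Finset.range 4, (start (13 * m + k + 1) - start (13 * m + k)) * dbt (13 * m + k)
      + (n + 1 - start (13 * m + 4)) * dbt (13 * m + 4)) :
    57931 * n ^ 2 ≤ 249696 * psi n + 7490880 * n := by
  have hE3 := EfL_closed m
  have hX1 : (1 : ℕ) ≤ 2 ^ m := Nat.one_le_two_pow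
  have hX1Z : (1 : ℤ) ≤ 2 ^ m := by exact_mod_cast hX1
  have h4 : ((4:ℤ)) ^ m = 2 ^ m * 2 ^ m := by
    rw [show (4:ℤ) = 2 * 2 by norm_num, mul_pow]
  have em : (13 * m + 4) % 13 = 4 := by omega
  have ed : (13 * m + 4) / 13 = m := by omega
  have hstart : start (13 * m + 4) = 83 * 2 ^ m := by
    rw [start, em, ed]; norm_num [Wt]
  have hstart1 : start (13 * m + 4 + 1) = 87 * 2 ^ m := by
    rw [start_succ, em, ed]; norm_num [Wt]
  have hdbt : dbt (13 * m + 4) = (2 ^ m - 1) * 54 + 2 ^ m * 19 := by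
    simp only [dbt]; rw [em, ed]; norm_num [Qt, Pt]
  simp only [Finset.sum_range_succ, Finset.sum_range_zero] at hpsi
  rw [term_eq m 0 (by norm_num), term_eq m 1 (by norm_num), term_eq m 2 (by norm_num), term_eq m 3 (by norm_num)] at hpsi
  norm_num [Wt, Qt, Pt] at hpsi
  rw [hstart, hdbt] at hpsi
  rw [hstart] at h1
  rw [hstart1] at h2
  have hb : 83 * 2 ^ m ≤ n + 1 := le_trans h1 (Nat.le_succ n)
  have hy0 : (0:ℤ) ≤ (n:ℤ) - 83 * 2 ^ m := by
    have : (83 * 2 ^ m : ℤ) ≤ n := by exact_mod_cast h1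
    linarith
  have hyY : (n:ℤ) - 83 * 2 ^ m ≤ 4 * 2 ^ m - 1 := by
    have : (n:ℤ) < 87 * 2 ^ m := by exact_mod_cast h2
    linarith
  have hkey := keyIneq4 ((2:ℤ) ^ m) ((n:ℤ) - 83 * 2 ^ m) hX1Z hy0 hyY
  zify [hX1, hb] at hpsi
  zify at hE3 ⊢
  nlinarith [hkey, hpsi, hE3, h4]

lemma case5 (n m : ℕ) (h1 : start (13 * m + 5) ≤ n) (h2 : n < start (13 * m + 5 + 1))
    (hpsi : psi n = EfL (13 * m)
      + ∑ k ∈ Finset.range 5, (start (13 * m + k + 1) - start (13 * m + k)) * dbt (13 * m + k)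
      + (n + 1 - start (13 * m + 5)) * dbt (13 * m + 5)) :
    57931 * n ^ 2 ≤ 249696 * psi n + 7490880 * n := by
  have hE3 := EfL_closed m
  have hX1 : (1 : ℕ) ≤ 2 ^ m := Nat.one_le_two_pow
  have hX1Z : (1 : ℤ) ≤ 2 ^ m := by exact_mod_cast hX1
  have h4 : ((4:ℤ)) ^ m = 2 ^ m * 2 ^ m := by
    rw [show (4:ℤ) = 2 * 2 by norm_num, mul_pow]
  have em : (13 * m + 5) % 13 = 5 := by omega
  have ed : (13 * m + 5) / 13 = m := by omega
  have hstart : start (13 * m + 5) = 87 * 2 ^ m := by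
    rw [start, em, ed]; norm_num [Wt]
  have hstart1 : start (13 * m + 5 + 1) = 91 * 2 ^ m := by
    rw [start_succ, em, ed]; norm_num [Wt]
  have hdbt : dbt (13 * m + 5) = (2 ^ m - 1) * 4 + 2 ^ m * 4 := by
    simp only [dbt]; rw [em, ed]; norm_num [Qt, Pt]
  simp only [Finset.sum_range_succ, Finset.sum_range_zero] at hpsi
  rw [term_eq m 0 (by norm_num), term_eq m 1 (by norm_num), term_eq m 2 (by norm_num), term_eq m 3 (by norm_num), term_eq m 4 (by norm_num)] at hpsi
  norm_num [Wt, Qt, Pt] at hpsi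
  rw [hstart, hdbt] at hpsi
  rw [hstart] at h1
  rw [hstart1] at h2
  have hb : 87 * 2 ^ m ≤ n + 1 := le_trans h1 (Nat.le_succ n)
  have hy0 : (0:ℤ) ≤ (n:ℤ) - 87 * 2 ^ m := by
    have : (87 * 2 ^ m : ℤ) ≤ n := by exact_mod_cast h1
    linarith
  have hyY : (n:ℤ) - 87 * 2 ^ m ≤ 4 * 2 ^ m - 1 := by
    have : (n:ℤ) < 91 * 2 ^ m := by exact_mod_cast h2
    linarith
  have hkey := keyIneq5 ((2:ℤ) ^ m) ((n:ℤ) - 87 * 2 ^ m) hX1Z hy0 hyY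
  zify [hX1, hb] at hpsi
  zify at hE3 ⊢
  nlinarith [hkey, hpsi, hE3, h4]

lemma case6 (n m : ℕ) (h1 : start (13 * m + 6) ≤ n) (h2 : n < start (13 * m + 6 + 1))
    (hpsi : psi n = EfL (13 * m)
      + ∑ k ∈ Finset.range 6, (start (13 * m + k + 1) - start (13 * m + k)) * dbt (13 * m + k)
      + (n + 1 - start (13 * m + 6)) * dbt (13 * m + 6)) :
    57931 * n ^ 2 ≤ 249696 * psi n + 7490880 * n := by
  have hE3 := EfL_closed m
  have hX1 : (1 : ℕ) ≤ 2 ^ m := Nat.one_le_two_pow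
  have hX1Z : (1 : ℤ) ≤ 2 ^ m := by exact_mod_cast hX1
  have h4 : ((4:ℤ)) ^ m = 2 ^ m * 2 ^ m := by
    rw [show (4:ℤ) = 2 * 2 by norm_num, mul_pow]
  have em : (13 * m + 6) % 13 = 6 := by omega
  have ed : (13 * m + 6) / 13 = m := by omega
  have hstart : start (13 * m + 6) = 91 * 2 ^ m := by
    rw [start, em, ed]; norm_num [Wt]
  have hstart1 : start (13 * m + 6 + 1) = 96 * 2 ^ m := by
    rw [start_succ, em, ed]; norm_num [Wt]
  have hdbt : dbt (13 * m + 6) = (2 ^ m - 1) * 49 + 2 ^ m * 23 := by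
    simp only [dbt]; rw [em, ed]; norm_num [Qt, Pt]
  simp only [Finset.sum_range_succ, Finset.sum_range_zero] at hpsi
  rw [term_eq m 0 (by norm_num), term_eq m 1 (by norm_num), term_eq m 2 (by norm_num), term_eq m 3 (by norm_num), term_eq m 4 (by norm_num), term_eq m 5 (by norm_num)] at hpsi
  norm_num [Wt, Qt, Pt] at hpsi
  rw [hstart, hdbt] at hpsi
  rw [hstart] at h1
  rw [hstart1] at h2
  have hb : 91 * 2 ^ m ≤ n + 1 := le_trans h1 (Nat.le_succ n)
  have hy0 : (0:ℤ) ≤ (n:ℤ) - 91 * 2 ^ m := by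
    have : (91 * 2 ^ m : ℤ) ≤ n := by exact_mod_cast h1
    linarith
  have hyY : (n:ℤ) - 91 * 2 ^ m ≤ 5 * 2 ^ m - 1 := by
    have : (n:ℤ) < 96 * 2 ^ m := by exact_mod_cast h2
    linarith
  have hkey := keyIneq6 ((2:ℤ) ^ m) ((n:ℤ) - 91 * 2 ^ m) hX1Z hy0 hyY
  zify [hX1, hb] at hpsi
  zify at hE3 ⊢
  nlinarith [hkey, hpsi, hE3, h4]

lemma case7 (n m : ℕ) (h1 : start (13 * m + 7) ≤ n) (h2 : n < start (13 * m + 7 + 1))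
    (hpsi : psi n = EfL (13 * m)
      + ∑ k ∈ Finset.range 7, (start (13 * m + k + 1) - start (13 * m + k)) * dbt (13 * m + k)
      + (n + 1 - start (13 * m + 7)) * dbt (13 * m + 7)) :
    57931 * n ^ 2 ≤ 249696 * psi n + 7490880 * n := by
  have hE3 := EfL_closed m
  have hX1 : (1 : ℕ) ≤ 2 ^ m := Nat.one_le_two_pow
  have hX1Z : (1 : ℤ) ≤ 2 ^ m := by exact_mod_cast hX1
  have h4 : ((4:ℤ)) ^ m = 2 ^ m * 2 ^ m := by
    rw [show (4:ℤ) = 2 * 2 by norm_num, mul_pow]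
  have em : (13 * m + 7) % 13 = 7 := by omega
  have ed : (13 * m + 7) / 13 = m := by omega
  have hstart : start (13 * m + 7) = 96 * 2 ^ m := by
    rw [start, em, ed]; norm_num [Wt]
  have hstart1 : start (13 * m + 7 + 1) = 101 * 2 ^ m := by
    rw [start_succ, em, ed]; norm_num [Wt]
  have hdbt : dbt (13 * m + 7) = (2 ^ m - 1) * 8 + 2 ^ m * 8 := by
    simp only [dbt]; rw [em, ed]; norm_num [Qt, Pt]
  simp only [Finset.sum_range_succ, Finset.sum_range_zero] at hpsi
  rw [term_eq m 0 (by norm_num), term_eq m 1 (by norm_num), term_eq m 2 (by norm_num), term_eq m 3 (by norm_num), term_eq m 4 (by norm_num), term_eq m 5 (by norm_num), term_eq m 6 (by norm_num)] at hpsi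
  norm_num [Wt, Qt, Pt] at hpsi
  rw [hstart, hdbt] at hpsi
  rw [hstart] at h1
  rw [hstart1] at h2
  have hb : 96 * 2 ^ m ≤ n + 1 := le_trans h1 (Nat.le_succ n)
  have hy0 : (0:ℤ) ≤ (n:ℤ) - 96 * 2 ^ m := by
    have : (96 * 2 ^ m : ℤ) ≤ n := by exact_mod_cast h1
    linarith
  have hyY : (n:ℤ) - 96 * 2 ^ m ≤ 5 * 2 ^ m - 1 := by
    have : (n:ℤ) < 101 * 2 ^ m := by exact_mod_cast h2
    linarith
  have hkey := keyIneq7 ((2:ℤ) ^ m) ((n:ℤ) - 96 * 2 ^ m) hX1Z hy0 hyY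
  zify [hX1, hb] at hpsi
  zify at hE3 ⊢
  nlinarith [hkey, hpsi, hE3, h4]

lemma case8 (n m : ℕ) (h1 : start (13 * m + 8) ≤ n) (h2 : n < start (13 * m + 8 + 1))
    (hpsi : psi n = EfL (13 * m)
      + ∑ k ∈ Finset.range 8, (start (13 * m + k + 1) - start (13 * m + k)) * dbt (13 * m + k)
      + (n + 1 - start (13 * m + 8)) * dbt (13 * m + 8)) :
    57931 * n ^ 2 ≤ 249696 * psi n + 7490880 * n := by
  have hE3 := EfL_closed m
  have hX1 : (1 : ℕ) ≤ 2 ^ m := Nat.one_le_two_pow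
  have hX1Z : (1 : ℤ) ≤ 2 ^ m := by exact_mod_cast hX1
  have h4 : ((4:ℤ)) ^ m = 2 ^ m * 2 ^ m := by
    rw [show (4:ℤ) = 2 * 2 by norm_num, mul_pow]
  have em : (13 * m + 8) % 13 = 8 := by omega
  have ed : (13 * m + 8) / 13 = m := by omega
  have hstart : start (13 * m + 8) = 101 * 2 ^ m := by
    rw [start, em, ed]; norm_num [Wt]
  have hstart1 : start (13 * m + 8 + 1) = 107 * 2 ^ m := by
    rw [start_succ, em, ed]; norm_num [Wt]
  have hdbt : dbt (13 * m + 8) = (2 ^ m - 1) * 58 + 2 ^ m * 37 := by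
    simp only [dbt]; rw [em, ed]; norm_num [Qt, Pt]
  simp only [Finset.sum_range_succ, Finset.sum_range_zero] at hpsi
  rw [term_eq m 0 (by norm_num), term_eq m 1 (by norm_num), term_eq m 2 (by norm_num), term_eq m 3 (by norm_num), term_eq m 4 (by norm_num), term_eq m 5 (by norm_num), term_eq m 6 (by norm_num), term_eq m 7 (by norm_num)] at hpsi
  norm_num [Wt, Qt, Pt] at hpsi
  rw [hstart, hdbt] at hpsi
  rw [hstart] at h1
  rw [hstart1] at h2
  have hb : 101 * 2 ^ m ≤ n + 1 := le_trans h1 (Nat.le_succ n)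
  have hy0 : (0:ℤ) ≤ (n:ℤ) - 101 * 2 ^ m := by
    have : (101 * 2 ^ m : ℤ) ≤ n := by exact_mod_cast h1
    linarith
  have hyY : (n:ℤ) - 101 * 2 ^ m ≤ 6 * 2 ^ m - 1 := by
    have : (n:ℤ) < 107 * 2 ^ m := by exact_mod_cast h2
    linarith
  have hkey := keyIneq8 ((2:ℤ) ^ m) ((n:ℤ) - 101 * 2 ^ m) hX1Z hy0 hyY
  zify [hX1, hb] at hpsi
  zify at hE3 ⊢
  nlinarith [hkey, hpsi, hE3, h4]

lemma case9 (n m : ℕ) (h1 : start (13 * m + 9) ≤ n) (h2 : n < start (13 * m + 9 + 1))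
    (hpsi : psi n = EfL (13 * m)
      + ∑ k ∈ Finset.range 9, (start (13 * m + k + 1) - start (13 * m + k)) * dbt (13 * m + k)
      + (n + 1 - start (13 * m + 9)) * dbt (13 * m + 9)) :
    57931 * n ^ 2 ≤ 249696 * psi n + 7490880 * n := by
  have hE3 := EfL_closed m
  have hX1 : (1 : ℕ) ≤ 2 ^ m := Nat.one_le_two_pow
  have hX1Z : (1 : ℤ) ≤ 2 ^ m := by exact_mod_cast hX1
  have h4 : ((4:ℤ)) ^ m = 2 ^ m * 2 ^ m := by
    rw [show (4:ℤ) = 2 * 2 by norm_num, mul_pow]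
  have em : (13 * m + 9) % 13 = 9 := by omega
  have ed : (13 * m + 9) / 13 = m := by omega
  have hstart : start (13 * m + 9) = 107 * 2 ^ m := by
    rw [start, em, ed]; norm_num [Wt]
  have hstart1 : start (13 * m + 9 + 1) = 112 * 2 ^ m := by
    rw [start_succ, em, ed]; norm_num [Wt]
  have hdbt : dbt (13 * m + 9) = (2 ^ m - 1) * 13 + 2 ^ m * 13 := by
    simp only [dbt]; rw [em, ed]; norm_num [Qt, Pt]
  simp only [Finset.sum_range_succ, Finset.sum_range_zero] at hpsi
  rw [term_eq m 0 (by norm_num), term_eq m 1 (by norm_num), term_eq m 2 (by norm_num), term_eq m 3 (by norm_num), term_eq m 4 (by norm_num), term_eq m 5 (by norm_num), term_eq m 6 (by norm_num), term_eq m 7 (by norm_num), term_eq m 8 (by norm_num)] at hpsi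
  norm_num [Wt, Qt, Pt] at hpsi
  rw [hstart, hdbt] at hpsi
  rw [hstart] at h1
  rw [hstart1] at h2
  have hb : 107 * 2 ^ m ≤ n + 1 := le_trans h1 (Nat.le_succ n)
  have hy0 : (0:ℤ) ≤ (n:ℤ) - 107 * 2 ^ m := by
    have : (107 * 2 ^ m : ℤ) ≤ n := by exact_mod_cast h1
    linarith
  have hyY : (n:ℤ) - 107 * 2 ^ m ≤ 5 * 2 ^ m - 1 := by
    have : (n:ℤ) < 112 * 2 ^ m := by exact_mod_cast h2
    linarith
  have hkey := keyIneq9 ((2:ℤ) ^ m) ((n:ℤ) - 107 * 2 ^ m) hX1Z hy0 hyY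
  zify [hX1, hb] at hpsi
  zify at hE3 ⊢
  nlinarith [hkey, hpsi, hE3, h4]

lemma case10 (n m : ℕ) (h1 : start (13 * m + 10) ≤ n) (h2 : n < start (13 * m + 10 + 1))
    (hpsi : psi n = EfL (13 * m)
      + ∑ k ∈ Finset.range 10, (start (13 * m + k + 1) - start (13 * m + k)) * dbt (13 * m + k)
      + (n + 1 - start (13 * m + 10)) * dbt (13 * m + 10)) :
    57931 * n ^ 2 ≤ 249696 * psi n + 7490880 * n := by
  have hE3 := EfL_closed m
  have hX1 : (1 : ℕ) ≤ 2 ^ m := Nat.one_le_two_pow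
  have hX1Z : (1 : ℤ) ≤ 2 ^ m := by exact_mod_cast hX1
  have h4 : ((4:ℤ)) ^ m = 2 ^ m * 2 ^ m := by
    rw [show (4:ℤ) = 2 * 2 by norm_num, mul_pow]
  have em : (13 * m + 10) % 13 = 10 := by omega
  have ed : (13 * m + 10) / 13 = m := by omega
  have hstart : start (13 * m + 10) = 112 * 2 ^ m := by
    rw [start, em, ed]; norm_num [Wt]
  have hstart1 : start (13 * m + 10 + 1) = 117 * 2 ^ m := by
    rw [start_succ, em, ed]; norm_num [Wt]
  have hdbt : dbt (13 * m + 10) = (2 ^ m - 1) * 18 + 2 ^ m * 18 := by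
    simp only [dbt]; rw [em, ed]; norm_num [Qt, Pt]
  simp only [Finset.sum_range_succ, Finset.sum_range_zero] at hpsi
  rw [term_eq m 0 (by norm_num), term_eq m 1 (by norm_num), term_eq m 2 (by norm_num), term_eq m 3 (by norm_num), term_eq m 4 (by norm_num), term_eq m 5 (by norm_num), term_eq m 6 (by norm_num), term_eq m 7 (by norm_num), term_eq m 8 (by norm_num), term_eq m 9 (by norm_num)] at hpsi
  norm_num [Wt, Qt, Pt] at hpsi
  rw [hstart, hdbt] at hpsi
  rw [hstart] at h1
  rw [hstart1] at h2
  have hb : 112 * 2 ^ m ≤ n + 1 := le_trans h1 (Nat.le_succ n)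
  have hy0 : (0:ℤ) ≤ (n:ℤ) - 112 * 2 ^ m := by
    have : (112 * 2 ^ m : ℤ) ≤ n := by exact_mod_cast h1
    linarith
  have hyY : (n:ℤ) - 112 * 2 ^ m ≤ 5 * 2 ^ m - 1 := by
    have : (n:ℤ) < 117 * 2 ^ m := by exact_mod_cast h2
    linarith
  have hkey := keyIneq10 ((2:ℤ) ^ m) ((n:ℤ) - 112 * 2 ^ m) hX1Z hy0 hyY
  zify [hX1, hb] at hpsi
  zify at hE3 ⊢
  nlinarith [hkey, hpsi, hE3, h4]

lemma case11 (n m : ℕ) (h1 : start (13 * m + 11) ≤ n) (h2 : n < start (13 * m + 11 + 1))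
    (hpsi : psi n = EfL (13 * m)
      + ∑ k ∈ Finset.range 11, (start (13 * m + k + 1) - start (13 * m + k)) * dbt (13 * m + k)
      + (n + 1 - start (13 * m + 11)) * dbt (13 * m + 11)) :
    57931 * n ^ 2 ≤ 249696 * psi n + 7490880 * n := by
  have hE3 := EfL_closed m
  have hX1 : (1 : ℕ) ≤ 2 ^ m := Nat.one_le_two_pow
  have hX1Z : (1 : ℤ) ≤ 2 ^ m := by exact_mod_cast hX1
  have h4 : ((4:ℤ)) ^ m = 2 ^ m * 2 ^ m := by
    rw [show (4:ℤ) = 2 * 2 by norm_num, mul_pow]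
  have em : (13 * m + 11) % 13 = 11 := by omega
  have ed : (13 * m + 11) / 13 = m := by omega
  have hstart : start (13 * m + 11) = 117 * 2 ^ m := by
    rw [start, em, ed]; norm_num [Wt]
  have hstart1 : start (13 * m + 11 + 1) = 123 * 2 ^ m := by
    rw [start_succ, em, ed]; norm_num [Wt]
  have hdbt : dbt (13 * m + 11) = (2 ^ m - 1) * 23 + 2 ^ m * 23 := by
    simp only [dbt]; rw [em, ed]; norm_num [Qt, Pt]
  simp only [Finset.sum_range_succ, Finset.sum_range_zero] at hpsi
  rw [term_eq m 0 (by norm_num), term_eq m 1 (by norm_num), term_eq m 2 (by norm_num), term_eq m 3 (by norm_num), term_eq m 4 (by norm_num), term_eq m 5 (by norm_num), term_eq m 6 (by norm_num), term_eq m 7 (by norm_num), term_eq m 8 (by norm_num), term_eq m 9 (by norm_num), term_eq m 10 (by norm_num)] at hpsi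
  norm_num [Wt, Qt, Pt] at hpsi
  rw [hstart, hdbt] at hpsi
  rw [hstart] at h1
  rw [hstart1] at h2
  have hb : 117 * 2 ^ m ≤ n + 1 := le_trans h1 (Nat.le_succ n)
  have hy0 : (0:ℤ) ≤ (n:ℤ) - 117 * 2 ^ m := by
    have : (117 * 2 ^ m : ℤ) ≤ n := by exact_mod_cast h1
    linarith
  have hyY : (n:ℤ) - 117 * 2 ^ m ≤ 6 * 2 ^ m - 1 := by
    have : (n:ℤ) < 123 * 2 ^ m := by exact_mod_cast h2
    linarith
  have hkey := keyIneq11 ((2:ℤ) ^ m) ((n:ℤ) - 117 * 2 ^ m) hX1Z hy0 hyY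
  zify [hX1, hb] at hpsi
  zify at hE3 ⊢
  nlinarith [hkey, hpsi, hE3, h4]

lemma case12 (n m : ℕ) (h1 : start (13 * m + 12) ≤ n) (h2 : n < start (13 * m + 12 + 1))
    (hpsi : psi n = EfL (13 * m)
      + ∑ k ∈ Finset.range 12, (start (13 * m + k + 1) - start (13 * m + k)) * dbt (13 * m + k)
      + (n + 1 - start (13 * m + 12)) * dbt (13 * m + 12)) :
    57931 * n ^ 2 ≤ 249696 * psi n + 7490880 * n := by
  have hE3 := EfL_closed m
  have hX1 : (1 : ℕ) ≤ 2 ^ m := Nat.one_le_two_pow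
  have hX1Z : (1 : ℤ) ≤ 2 ^ m := by exact_mod_cast hX1
  have h4 : ((4:ℤ)) ^ m = 2 ^ m * 2 ^ m := by
    rw [show (4:ℤ) = 2 * 2 by norm_num, mul_pow]
  have em : (13 * m + 12) % 13 = 12 := by omega
  have ed : (13 * m + 12) / 13 = m := by omega
  have hstart : start (13 * m + 12) = 123 * 2 ^ m := by
    rw [start, em, ed]; norm_num [Wt]
  have hstart1 : start (13 * m + 12 + 1) = 128 * 2 ^ m := by
    rw [start_succ, em, ed]; norm_num [Wt]
  have hdbt : dbt (13 * m + 12) = (2 ^ m - 1) * 29 + 2 ^ m * 29 := by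
    simp only [dbt]; rw [em, ed]; norm_num [Qt, Pt]
  simp only [Finset.sum_range_succ, Finset.sum_range_zero] at hpsi
  rw [term_eq m 0 (by norm_num), term_eq m 1 (by norm_num), term_eq m 2 (by norm_num), term_eq m 3 (by norm_num), term_eq m 4 (by norm_num), term_eq m 5 (by norm_num), term_eq m 6 (by norm_num), term_eq m 7 (by norm_num), term_eq m 8 (by norm_num), term_eq m 9 (by norm_num), term_eq m 10 (by norm_num), term_eq m 11 (by norm_num)] at hpsi
  norm_num [Wt, Qt, Pt] at hpsi
  rw [hstart, hdbt] at hpsi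
  rw [hstart] at h1
  rw [hstart1] at h2
  have hb : 123 * 2 ^ m ≤ n + 1 := le_trans h1 (Nat.le_succ n)
  have hy0 : (0:ℤ) ≤ (n:ℤ) - 123 * 2 ^ m := by
    have : (123 * 2 ^ m : ℤ) ≤ n := by exact_mod_cast h1
    linarith
  have hyY : (n:ℤ) - 123 * 2 ^ m ≤ 5 * 2 ^ m - 1 := by
    have : (n:ℤ) < 128 * 2 ^ m := by exact_mod_cast h2
    linarith
  have hkey := keyIneq12 ((2:ℤ) ^ m) ((n:ℤ) - 123 * 2 ^ m) hX1Z hy0 hyY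
  zify [hX1, hb] at hpsi
  zify at hE3 ⊢
  nlinarith [hkey, hpsi, hE3, h4]

lemma main_ineq (n : ℕ) : 57931 * n ^ 2 ≤ 249696 * psi n + 7490880 * n := by
  rcases Nat.lt_or_ge n 64 with hn | hn
  · have h1 : n * n ≤ 63 * n := Nat.mul_le_mul_right n (by omega)
    have h2 : n ^ 2 = n * n := sq n
    nlinarith [Nat.zero_le (psi n)]
  · obtain ⟨h1, h2⟩ := exists_block hn
    obtain ⟨m, i, hi13, ht⟩ : ∃ m i, i < 13 ∧ bIdx n = 13 * m + i :=
      ⟨bIdx n / 13, bIdx n % 13, by omega, by omega⟩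
    rw [ht] at h1 h2
    have hpsi := psi_eval n _ h1 h2
    rw [EfL_split] at hpsi
    interval_cases i
    · exact case0 n m (by simpa using h1) (by simpa using h2) (by simpa using hpsi)
    · exact case1 n m h1 h2 hpsi
    · exact case2 n m h1 h2 hpsi
    · exact case3 n m h1 h2 hpsi
    · exact case4 n m h1 h2 hpsi
    · exact case5 n m h1 h2 hpsi
    · exact case6 n m h1 h2 hpsi
    · exact case7 n m h1 h2 hpsi
    · exact case8 n m h1 h2 hpsi
    · exact case9 n m h1 h2 hpsi
    · exact case10 n m h1 h2 hpsi
    · exact case11 n m h1 h2 hpsi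
    · exact case12 n m h1 h2 hpsi

lemma edgeCount_le (n : ℕ) : edgeCount G n ≤ n * n := by
  rw [edgeCount_eq]
  calc (((Finset.Ico 1 (n + 1)) ×ˢ (Finset.Ico 1 (n + 1))).filter
      (fun p => p.1 < p.2 ∧ lam p.1 < lam p.2)).card
      ≤ ((Finset.Ico 1 (n + 1)) ×ˢ (Finset.Ico 1 (n + 1))).card := Finset.card_filter_le _ _
    _ = n * n := by rw [Finset.card_product, Nat.card_Ico]; norm_num

lemma main_real (n : ℕ) :
    (57931 : ℝ) * (n : ℝ) ^ 2 ≤ 249696 * (edgeCount G n : ℝ) + 7490880 * (n : ℝ) := by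
  have h1 := main_ineq n
  have h2 := psi_le n
  have h3 : 57931 * n ^ 2 ≤ 249696 * edgeCount G n + 7490880 * n := by
    have h4 : 249696 * psi n ≤ 249696 * edgeCount G n := Nat.mul_le_mul_left 249696 h2
    omega
  exact_mod_cast h3

end I13

theorem exists_I13_free_graph_with_large_liminf :
    ∃ G : SimpleGraph ℕ, ¬ HasIncPath G 13 ∧
      (57931 / 249696 : ℝ) ≤
        liminf (fun n : ℕ => (edgeCount G n : ℝ) / n ^ 2) atTop := by
  refine ⟨I13.G, I13.no_path, ?_⟩
  have hev : ∀ᶠ n : ℕ in atTop,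
      (57931 / 249696 : ℝ) - 30 / (n : ℝ) ≤ (edgeCount I13.G n : ℝ) / (n : ℝ) ^ 2 := by
    filter_upwards [eventually_ge_atTop 1] with n hn
    have hn0 : (0 : ℝ) < (n : ℝ) := by
      have : (1 : ℝ) ≤ (n : ℝ) := by exact_mod_cast hn
      linarith
    have hn2 : (0 : ℝ) < (n : ℝ) ^ 2 := by positivity
    rw [le_div_iff₀ hn2]
    have hm := I13.main_real n
    have hinv : (30 : ℝ) / n * n ^ 2 = 30 * n := by field_simp
    nlinarith [hm]
  have hvb : ∀ n : ℕ, (edgeCount I13.G n : ℝ) / (n : ℝ) ^ 2 ≤ 1 := by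
    intro n
    rcases Nat.eq_zero_or_pos n with h0 | hp
    · subst h0; simp [I13.edgeCount_zero]
    · have hn0 : (0 : ℝ) < (n : ℝ) := by exact_mod_cast hp
      have hn2 : (0 : ℝ) < (n : ℝ) ^ 2 := by positivity
      rw [div_le_one hn2]
      have hb := I13.edgeCount_le n
      have hbr : (edgeCount I13.G n : ℝ) ≤ (n : ℝ) * (n : ℝ) := by exact_mod_cast hb
      nlinarith
  have htend : Tendsto (fun n : ℕ => (57931 / 249696 : ℝ) - 30 / (n : ℝ)) atTop
      (nhds (57931 / 249696)) := by
    have h0 : Tendsto (fun n : ℕ => (30 : ℝ) / (n : ℝ)) atTop (nhds 0) :=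
      tendsto_const_div_atTop_nhds_zero_nat 30
    simpa using tendsto_const_nhds.sub h0
  have h1 : liminf (fun n : ℕ => (57931 / 249696 : ℝ) - 30 / (n : ℝ)) atTop
      = 57931 / 249696 := htend.liminf_eq
  rw [← h1]
  exact liminf_le_liminf hev htend.isBoundedUnder_ge
    ((isBoundedUnder_of ⟨1, fun n => hvb n⟩).isCoboundedUnder_ge)
end

section
/- Let k ≥ 2 and l ≥ 1 be integers, let D be a k×l matrix of nonnegative integers, and let C and M be as defined from D. For all integers 1 ≤ k_1 < k_2, the number of edges (i,j) of C with position i lying in the block B_{k_1} and position j lying in the block B_{k_2} equals 2^{k_1 + k_2 − 2} · Σ_{i=1}^{l} Σ_{j=1}^{l} m_{i,j}. -/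
open Filter

/-- The atom `D_j`: `d_{1,j}` copies of `1`, then `d_{2,j}` copies of `2`, …,
then `d_{k,j}` copies of `k`. -/
def atomList {k l : ℕ} (D : Fin k → Fin l → ℕ) (j : Fin l) : List ℕ :=
  (List.finRange k).flatMap fun i => List.replicate (D i j) ((i : ℕ) + 1)

/-- The block `B_m` (for `m ≥ 1`): `2^(m-1)` copies of `D_1`, then `2^(m-1)` copies
of `D_2`, …, then `2^(m-1)` copies of `D_l`, concatenated. -/
def blockList {k l : ℕ} (D : Fin k → Fin l → ℕ) (m : ℕ) : List ℕ :=
  (List.finRange l).flatMap fun j => (List.replicate (2 ^ (m - 1)) (atomList D j)).flatten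

/-- The concatenation `B_1 B_2 ⋯ B_m`. -/
def prefixList {k l : ℕ} (D : Fin k → Fin l → ℕ) (m : ℕ) : List ℕ :=
  (List.range m).flatMap fun x => blockList D (x + 1)

/-- The term `c_r` (1-indexed) of the infinite sequence `C = B_1 B_2 B_3 ⋯`. -/
def seqC {k l : ℕ} (D : Fin k → Fin l → ℕ) (r : ℕ) : ℕ :=
  (prefixList D r).getD (r - 1) 0

/-- The `(i,j)` entry `m_{i,j}` of the matrix `M`:
`m_{i,j} = Σ_{x=1}^{k-1} d_{x,i} (Σ_{y=x+1}^{k} d_{y,j})`. -/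
def Ment {k l : ℕ} (D : Fin k → Fin l → ℕ) (i j : Fin l) : ℕ :=
  ∑ x : Fin k, D x i * ∑ y ∈ Finset.Ioi x, D y j

/-- The number of edges `(i, j)` of `C` (pairs `i < j` with `c_i < c_j`) such that
`a < i ≤ b` and `c < j ≤ d` (positions are 1-indexed). -/
noncomputable def edgesBetween {k l : ℕ} (D : Fin k → Fin l → ℕ) (a b c d : ℕ) : ℕ :=
  {p : ℕ × ℕ | p.1 < p.2 ∧ a < p.1 ∧ p.1 ≤ b ∧ c < p.2 ∧ p.2 ≤ d ∧
    seqC D p.1 < seqC D p.2}.ncard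

section Aux

variable {k l : ℕ} (D : Fin k → Fin l → ℕ)

lemma mapSum_atom (g : ℕ → ℕ) (j : Fin l) :
    ((atomList D j).map g).sum = ∑ x : Fin k, D x j * g ((x : ℕ) + 1) := by
  rw [atomList, List.map_flatMap, Fin.sum_univ_def, List.flatMap_def, List.sum_flatten,
    List.map_map]
  congr 1
  refine List.map_congr_left fun i _ => ?_
  simp [List.sum_replicate]

lemma mapSum_block (g : ℕ → ℕ) (m : ℕ) :
    ((blockList D m).map g).sum
      = 2 ^ (m - 1) * ∑ j : Fin l, ∑ x : Fin k, D x j * g ((x : ℕ) + 1) := by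
  rw [Finset.mul_sum, blockList, List.map_flatMap, Fin.sum_univ_def, List.flatMap_def,
    List.sum_flatten, List.map_map]
  congr 1
  refine List.map_congr_left fun j _ => ?_
  simp only [Function.comp]
  rw [List.map_flatten, List.map_replicate, List.sum_flatten, List.map_replicate,
    List.sum_replicate, smul_eq_mul, mapSum_atom]

lemma block_length (m : ℕ) :
    (blockList D m).length = 2 ^ (m - 1) * ∑ j : Fin l, ∑ x : Fin k, D x j := by
  have := mapSum_block D (fun _ => 1) m
  simpa using this

lemma prefix_succ (m : ℕ) :
    prefixList D (m + 1) = prefixList D m ++ blockList D (m + 1) := by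
  rw [prefixList, prefixList, List.range_succ, List.flatMap_append]
  simp

lemma prefix_prefix {m n : ℕ} (h : m ≤ n) : prefixList D m <+: prefixList D n := by
  induction n with
  | zero =>
    have : m = 0 := by omega
    subst this; exact List.prefix_refl _
  | succ n ih =>
    rcases Nat.lt_or_ge m (n + 1) with h' | h'
    · exact (ih (by omega)).trans (by rw [prefix_succ]; exact List.prefix_append _ _)
    · have : m = n + 1 := by omega
      subst this; exact List.prefix_refl _

lemma prefix_len_ge (hA : 0 < ∑ j : Fin l, ∑ x : Fin k, D x j) (m : ℕ) :
    m ≤ (prefixList D m).length := by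
  induction m with
  | zero => simp
  | succ n ih =>
    rw [prefix_succ, List.length_append, block_length]
    have h2 : 0 < 2 ^ (n + 1 - 1) := by positivity
    have : 0 < 2 ^ (n + 1 - 1) * ∑ j : Fin l, ∑ x : Fin k, D x j := Nat.mul_pos h2 hA
    omega

lemma getD_of_prefix {l₁ l₂ : List ℕ} {n : ℕ} (h : l₁ <+: l₂) (hn : n < l₁.length) :
    l₂.getD n 0 = l₁.getD n 0 := by
  obtain ⟨t, rfl⟩ := h
  rw [List.getD_append _ _ _ _ hn]

lemma seqC_eq (hA : 0 < ∑ j : Fin l, ∑ x : Fin k, D x j) {r m : ℕ} (hr : 1 ≤ r)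
    (h : r ≤ (prefixList D m).length) :
    seqC D r = (prefixList D m).getD (r - 1) 0 := by
  rw [seqC]
  have h1 := prefix_prefix D (le_max_left r m)
  have h2 := prefix_prefix D (le_max_right r m)
  have hr' : r - 1 < (prefixList D r).length :=
    lt_of_lt_of_le (by omega) (prefix_len_ge D hA r)
  rw [← getD_of_prefix h1 hr', getD_of_prefix h2 (by omega)]

lemma sum_getD (B : List ℕ) (g : ℕ → ℕ) :
    ∑ x ∈ Finset.range B.length, g (B.getD x 0) = (B.map g).sum := by
  induction B with
  | nil => simp
  | cons h t ih =>
    rw [List.length_cons, Finset.sum_range_succ']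
    simp only [List.getD_cons_succ, List.getD_cons_zero, List.map_cons, List.sum_cons, ih]
    omega

lemma seqC_block (hm : 1 ≤ m) {x : ℕ} (hx : x < (blockList D m).length) :
    seqC D ((prefixList D (m - 1)).length + 1 + x) = (blockList D m).getD x 0 := by
  have hA : 0 < ∑ j : Fin l, ∑ x : Fin k, D x j := by
    by_contra h
    rw [block_length] at hx
    have h0 : (∑ j : Fin l, ∑ x : Fin k, D x j) = 0 := by omega
    rw [h0, mul_zero] at hx
    omega
  have hm1 : m - 1 + 1 = m := by omega
  have hsplit : prefixList D m = prefixList D (m - 1) ++ blockList D m := by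
    conv_lhs => rw [← hm1, prefix_succ, hm1]
  have hlen : (prefixList D (m - 1)).length + 1 + x ≤ (prefixList D m).length := by
    rw [hsplit, List.length_append]; omega
  rw [seqC_eq D hA (by omega) hlen, hsplit,
    show (prefixList D (m - 1)).length + 1 + x - 1 = (prefixList D (m - 1)).length + x by omega,
    List.getD_append_right _ _ _ _ (by omega)]
  simp

end Aux

set_option maxHeartbeats 2000000 in
/-- Lemma 3.2: for `1 ≤ k₁ < k₂`, the number of edges of `C` with one position in the
block `B_{k₁}` and the other position in the block `B_{k₂}` is
`2^(k₁+k₂-2) · Σ_{i=1}^{l} Σ_{j=1}^{l} m_{i,j}`. -/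
theorem edges_between_blocks (k l : ℕ) (hk : 2 ≤ k) (hl : 1 ≤ l)
    (D : Fin k → Fin l → ℕ) (k₁ k₂ : ℕ) (hk₁ : 1 ≤ k₁) (hk₁k₂ : k₁ < k₂) :
    edgesBetween D (prefixList D (k₁ - 1)).length (prefixList D k₁).length
        (prefixList D (k₂ - 1)).length (prefixList D k₂).length =
      2 ^ (k₁ + k₂ - 2) * ∑ i : Fin l, ∑ j : Fin l, Ment D i j := by
  classical
  set a := (prefixList D (k₁ - 1)).length with ha
  set b := (prefixList D k₁).length with hb
  set c := (prefixList D (k₂ - 1)).length with hc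
  set d := (prefixList D k₂).length with hd
  have hbc : b ≤ c := (prefix_prefix D (by omega : k₁ ≤ k₂ - 1)).length_le
  have hab : b = a + (blockList D k₁).length := by
    rw [hb, ha, show k₁ = (k₁ - 1) + 1 by omega, prefix_succ, List.length_append,
      show k₁ - 1 + 1 = k₁ by omega]
  have hcd : d = c + (blockList D k₂).length := by
    rw [hd, hc, show k₂ = (k₂ - 1) + 1 by omega, prefix_succ, List.length_append,
      show k₂ - 1 + 1 = k₂ by omega]
  have hset : {p : ℕ × ℕ | p.1 < p.2 ∧ a < p.1 ∧ p.1 ≤ b ∧ c < p.2 ∧ p.2 ≤ d ∧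
      seqC D p.1 < seqC D p.2}
      = ↑((Finset.Ioc a b ×ˢ Finset.Ioc c d).filter fun p => seqC D p.1 < seqC D p.2) := by
    ext p
    simp only [Set.mem_setOf_eq, Finset.coe_filter, Finset.mem_product, Finset.mem_Ioc]
    constructor
    · rintro ⟨_, h2, h3, h4, h5, h6⟩; exact ⟨⟨⟨h2, h3⟩, ⟨h4, h5⟩⟩, h6⟩
    · rintro ⟨⟨⟨h2, h3⟩, ⟨h4, h5⟩⟩, h6⟩; exact ⟨by omega, h2, h3, h4, h5, h6⟩
  rw [edgesBetween, hset, Set.ncard_coe_finset, Finset.card_filter, Finset.sum_product]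
  dsimp only
  have hIoc : ∀ (u v n : ℕ), v = u + n → ∀ f : ℕ → ℕ,
      ∑ i ∈ Finset.Ioc u v, f i = ∑ x ∈ Finset.range n, f (u + 1 + x) := by
    intro u v n hv f
    rw [← Finset.Ico_add_one_add_one_eq_Ioc, Finset.sum_Ico_eq_sum_range,
      show v + 1 - (u + 1) = n from by omega]
  rw [hIoc a b _ hab, ha]
  have step1 : ∑ x ∈ Finset.range (blockList D k₁).length,
      ∑ i ∈ Finset.Ioc c d,
        (if seqC D ((prefixList D (k₁ - 1)).length + 1 + x) < seqC D i then 1 else 0)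
      = ∑ x ∈ Finset.range (blockList D k₁).length,
        ∑ y ∈ Finset.range (blockList D k₂).length,
          (if (blockList D k₁).getD x 0 < (blockList D k₂).getD y 0 then 1 else 0) := by
    refine Finset.sum_congr rfl fun x hx => ?_
    rw [Finset.mem_range] at hx
    rw [hIoc c d _ hcd, hc, seqC_block D hk₁ hx]
    refine Finset.sum_congr rfl fun y hy => ?_
    rw [Finset.mem_range] at hy
    rw [seqC_block D (by omega) hy]
  rw [step1]
  have step2 : ∑ x ∈ Finset.range (blockList D k₁).length,
      ∑ y ∈ Finset.range (blockList D k₂).length,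
        (if (blockList D k₁).getD x 0 < (blockList D k₂).getD y 0 then 1 else 0)
      = ((blockList D k₁).map fun u =>
          ((blockList D k₂).map fun v => if u < v then 1 else 0).sum).sum := by
    rw [← sum_getD (blockList D k₁)
      (fun u => ((blockList D k₂).map fun v => if u < v then 1 else 0).sum)]
    exact Finset.sum_congr rfl fun x _ =>
      sum_getD (blockList D k₂) (fun v => if (blockList D k₁).getD x 0 < v then 1 else 0)
  rw [step2, mapSum_block]
  have step3 : ∀ u : ℕ,
      ((blockList D k₂).map fun v => if u < v then 1 else 0).sum
        = 2 ^ (k₂ - 1) * ∑ j : Fin l, ∑ y : Fin k, D y j * (if u < (y : ℕ) + 1 then 1 else 0) :=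
    fun u => mapSum_block D _ k₂
  simp only [step3]
  have hfilter : ∀ (x : Fin k) (j : Fin l),
      (∑ y : Fin k, D y j * (if (x : ℕ) + 1 < (y : ℕ) + 1 then 1 else 0))
        = ∑ y ∈ Finset.Ioi x, D y j := by
    intro x j
    have h1 : ∀ y : Fin k, ((x : ℕ) + 1 < (y : ℕ) + 1) ↔ x < y := fun y => by
      rw [Fin.lt_def]; omega
    simp only [mul_ite, mul_one, mul_zero, h1]
    rw [← Finset.sum_filter]
    congr 1
    ext y
    simp
  simp only [hfilter]
  rw [show k₁ + k₂ - 2 = (k₁ - 1) + (k₂ - 1) by omega, pow_add, mul_assoc]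
  congr 1
  rw [Finset.mul_sum]
  refine Finset.sum_congr rfl fun i _ => ?_
  calc ∑ x : Fin k, D x i * (2 ^ (k₂ - 1) * ∑ j : Fin l, ∑ y ∈ Finset.Ioi x, D y j)
      = ∑ x : Fin k, ∑ j : Fin l,
          2 ^ (k₂ - 1) * (D x i * ∑ y ∈ Finset.Ioi x, D y j) := by
        refine Finset.sum_congr rfl fun x _ => ?_
        rw [Finset.mul_sum, Finset.mul_sum]
        exact Finset.sum_congr rfl fun j _ => by ring
    _ = ∑ j : Fin l, ∑ x : Fin k,
          2 ^ (k₂ - 1) * (D x i * ∑ y ∈ Finset.Ioi x, D y j) := Finset.sum_comm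
    _ = 2 ^ (k₂ - 1) * ∑ j : Fin l, Ment D i j := by
        rw [Finset.mul_sum]
        exact Finset.sum_congr rfl fun j _ => by rw [← Finset.mul_sum, Ment]
end

section
/- Let k ≥ 2 and l ≥ 1 be integers, let D be a k×l matrix of nonnegative integers, and let C and M be as defined from D. For every integer m ≥ 1, the number of edges (i,j) of C with both positions i and j lying in the block B_m is at least 2^{2m−2} · Σ_{i=1}^{l−1} Σ_{j=i+1}^{l} m_{i,j} + binom(2^{m−1}, 2) · Σ_{i=1}^{l} m_{i,i}; in particular it is at least (4^m/4) Σ_{i=1}^{l−1} Σ_{j=i+1}^{l} m_{i,j} + (4^m/8) Σ_{i=1}^{l} m_{i,i} − c_D · 2^m for a constant c_D depending only on D. -/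
open Filter

namespace EP
open Finset

/-- getD of a flattened list of lists at a structured index. -/
lemma flatten_getD (L : List (List ℕ)) (i u : ℕ) (hu : u < (L.getD i []).length) :
    L.flatten.getD ((∑ r ∈ Finset.range i, (L.getD r []).length) + u) 0
      = (L.getD i []).getD u 0 := by
  induction L generalizing i with
  | nil => simp at hu
  | cons a t ih =>
    cases i with
    | zero =>
      simp only [List.getD_cons_zero, Finset.range_zero, Finset.sum_empty, Nat.zero_add,
        List.flatten_cons] at *
      exact List.getD_append _ _ _ _ hu
    | succ i =>
      simp only [List.getD_cons_succ] at hu ⊢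
      rw [Finset.sum_range_succ' (fun r => ((a :: t).getD r []).length) i]
      simp only [List.getD_cons_succ, List.getD_cons_zero, List.flatten_cons]
      have : ∑ r ∈ Finset.range i, (t.getD r []).length + a.length + u
          = a.length + ((∑ r ∈ Finset.range i, (t.getD r []).length) + u) := by omega
      rw [this, List.getD_append_right _ _ _ _ (by omega)]
      simp only [Nat.add_sub_cancel_left]
      exact ih i hu

end EP

namespace EP
variable {k l : ℕ}

/-- ℕ-extension of D. -/
def De (D : Fin k → Fin l → ℕ) (x j : ℕ) : ℕ :=
  if h : x < k ∧ j < l then D ⟨x, h.1⟩ ⟨j, h.2⟩ else 0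

lemma De_coe (D : Fin k → Fin l → ℕ) (x : Fin k) (j : Fin l) : De D x j = D x j := by
  simp [De]

def aoff (D : Fin k → Fin l → ℕ) (j x : ℕ) : ℕ := ∑ r ∈ Finset.range x, De D r j

def alen (D : Fin k → Fin l → ℕ) (j : ℕ) : ℕ := aoff D j k

lemma atom_length (D : Fin k → Fin l → ℕ) (j : Fin l) :
    (atomList D j).length = alen D j := by
  rw [atomList, List.length_flatMap]
  have h1 : (List.finRange k).map (List.length ∘ fun i : Fin k =>
      List.replicate (D i j) ((i : ℕ) + 1)) = List.ofFn (fun i : Fin k => D i j) := by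
    rw [List.ofFn_eq_map]
    simp
  rw [show (List.finRange k).map (fun a : Fin k => (List.replicate (D a j) ((a : ℕ) + 1)).length)
      = List.ofFn (fun i : Fin k => D i j) from h1, List.sum_ofFn, alen, aoff]
  rw [← Fin.sum_univ_eq_sum_range (fun r => De D r j) k]
  exact Finset.sum_congr rfl fun x _ => (De_coe D x j).symm

lemma aoff_mono_add (D : Fin k → Fin l → ℕ) (j : ℕ) {x x' : ℕ} (h : x < x') :
    aoff D j x + De D x j ≤ aoff D j x' := by
  rw [aoff, aoff, ← Finset.sum_range_succ]
  exact Finset.sum_le_sum_of_subset (Finset.range_subset_range.2 h)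

lemma aoff_lt_alen (D : Fin k → Fin l → ℕ) (j : Fin l) (x : Fin k) {a : ℕ}
    (ha : a < D x j) : aoff D j x + a < alen D j := by
  have := aoff_mono_add D j x.isLt
  rw [De_coe] at this
  exact lt_of_lt_of_le (by omega) this

lemma atom_getD (D : Fin k → Fin l → ℕ) (j : Fin l) (x : Fin k) {a : ℕ}
    (ha : a < D x j) : (atomList D j).getD (aoff D j x + a) 0 = (x : ℕ) + 1 := by
  have hL : atomList D j = ((List.finRange k).map
      (fun i : Fin k => List.replicate (D i j) ((i : ℕ) + 1))).flatten := rfl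
  set g : Fin k → List ℕ := fun i : Fin k => List.replicate (D i j) ((i : ℕ) + 1) with hg
  have hget : ∀ (r : ℕ) (hr : r < k), ((List.finRange k).map g).getD r [] = g ⟨r, hr⟩ := by
    intro r hr
    rw [List.getD_eq_getElem _ _ (by simpa using hr)]
    simp [g]
  have hx : ((List.finRange k).map g).getD (x : ℕ) [] = g x := by
    rw [hget _ x.isLt]
  have hsum : ∀ r : ℕ, r < k → (((List.finRange k).map g).getD r []).length = De D r j := by
    intro r hr
    rw [hget r hr]
    simp [g, De, hr, j.isLt]
  have haoff : aoff D j x = ∑ r ∈ Finset.range (x : ℕ),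
      (((List.finRange k).map g).getD r []).length := by
    refine Finset.sum_congr rfl fun r hr => ?_
    rw [hsum r (lt_of_lt_of_le (Finset.mem_range.1 hr) x.isLt.le)]
  rw [hL, haoff, flatten_getD _ _ _ (by rw [hx]; simpa [g] using ha), hx, hg]
  rw [List.getD_eq_getElem _ _ (by simpa using ha), List.getElem_replicate]

def bstart (D : Fin k → Fin l → ℕ) (N j t : ℕ) : ℕ :=
  (∑ r ∈ Finset.range j, N * alen D r) + t * alen D j

def phi' (D : Fin k → Fin l → ℕ) (N j t x a : ℕ) : ℕ := bstart D N j t + (aoff D j x + a)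

def blen (D : Fin k → Fin l → ℕ) (N : ℕ) : ℕ := ∑ r ∈ Finset.range l, N * alen D r

lemma inner_length (D : Fin k → Fin l → ℕ) (N : ℕ) (j : Fin l) :
    ((List.replicate N (atomList D j)).flatten).length = N * alen D j := by
  rw [List.length_flatten]
  simp [atom_length]

lemma inner_getD (D : Fin k → Fin l → ℕ) (N : ℕ) (j : Fin l) {t w : ℕ}
    (ht : t < N) (hw : w < alen D j) :
    ((List.replicate N (atomList D j)).flatten).getD (t * alen D j + w) 0
      = (atomList D j).getD w 0 := by
  have hget : ∀ (r : ℕ), r < N →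
      (List.replicate N (atomList D j)).getD r [] = atomList D j := by
    intro r hr
    rw [List.getD_eq_getElem _ _ (by simpa using hr), List.getElem_replicate]
  have hsum : t * alen D j
      = ∑ r ∈ Finset.range t, ((List.replicate N (atomList D j)).getD r []).length := by
    rw [Finset.sum_congr rfl fun r hr => by
      rw [hget r (lt_of_lt_of_le (Finset.mem_range.1 hr) ht.le), atom_length]]
    simp [mul_comm]
  rw [hsum, flatten_getD _ _ _ (by rw [hget t ht, atom_length]; exact hw), hget t ht]

lemma block_length (D : Fin k → Fin l → ℕ) (m : ℕ) :
    (blockList D m).length = blen D (2 ^ (m - 1)) := by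
  rw [blockList, List.length_flatMap]
  have : (List.finRange l).map (List.length ∘ fun j : Fin l =>
      (List.replicate (2 ^ (m-1)) (atomList D j)).flatten)
      = List.ofFn (fun j : Fin l => 2 ^ (m-1) * alen D j) := by
    rw [List.ofFn_eq_map]
    simp [inner_length, atom_length]
  rw [show (List.finRange l).map (fun a : Fin l => ((List.replicate (2 ^ (m-1)) (atomList D a)).flatten).length)
      = List.ofFn (fun j : Fin l => 2 ^ (m-1) * alen D j) from this, List.sum_ofFn, blen, ← Fin.sum_univ_eq_sum_range (fun r => 2 ^ (m-1) * alen D r) l]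

lemma block_getD (D : Fin k → Fin l → ℕ) (m : ℕ) (j : Fin l) {t : ℕ}
    (ht : t < 2 ^ (m - 1)) (x : Fin k) {a : ℕ} (ha : a < D x j) :
    (blockList D m).getD (phi' D (2 ^ (m - 1)) j t x a) 0 = (x : ℕ) + 1 := by
  set N := 2 ^ (m - 1)
  set g : Fin l → List ℕ := fun j : Fin l => (List.replicate N (atomList D j)).flatten with hg
  have hL : blockList D m = ((List.finRange l).map g).flatten := rfl
  have hget : ∀ (r : ℕ) (hr : r < l), ((List.finRange l).map g).getD r [] = g ⟨r, hr⟩ := by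
    intro r hr
    rw [List.getD_eq_getElem _ _ (by simpa using hr)]
    simp [g]
  have hsum : (∑ r ∈ Finset.range (j : ℕ), N * alen D r)
      = ∑ r ∈ Finset.range (j : ℕ), (((List.finRange l).map g).getD r []).length := by
    refine Finset.sum_congr rfl fun r hr => ?_
    rw [hget r (lt_of_lt_of_le (Finset.mem_range.1 hr) j.isLt.le), hg, inner_length]
  have hoff : aoff D j x + a < alen D j := aoff_lt_alen D j x ha
  have harg : phi' D N j t x a
      = (∑ r ∈ Finset.range (j : ℕ), (((List.finRange l).map g).getD r []).length)
        + (t * alen D j + (aoff D j x + a)) := by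
    rw [← hsum, phi', bstart]; ring
  rw [hL, harg, flatten_getD _ _ _ ?_, hget _ j.isLt]
  · exact (inner_getD D N j ht hoff).trans (atom_getD D j x ha)
  · rw [hget _ j.isLt, hg, inner_length]
    calc t * alen D j + (aoff D j x + a) < (t + 1) * alen D j := by
          rw [add_one_mul]; omega
      _ ≤ N * alen D j := Nat.mul_le_mul_right _ (by omega)

lemma phi_lt_blen (D : Fin k → Fin l → ℕ) (N : ℕ) (j : Fin l) {t : ℕ} (ht : t < N)
    (x : Fin k) {a : ℕ} (ha : a < D x j) : phi' D N j t x a < blen D N := by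
  have hoff : aoff D j x + a < alen D j := aoff_lt_alen D j x ha
  have h1 : phi' D N j t x a < (∑ r ∈ Finset.range (j : ℕ), N * alen D r) + N * alen D j := by
    rw [phi', bstart]
    have : t * alen D j + (aoff D j x + a) < (t + 1) * alen D j := by
      rw [add_one_mul]; omega
    calc _ < (∑ r ∈ Finset.range (j : ℕ), N * alen D r) + (t+1) * alen D j := by omega
      _ ≤ _ := by
        exact Nat.add_le_add_left (Nat.mul_le_mul_right _ (by omega)) _
  calc phi' D N j t x a < ∑ r ∈ Finset.range ((j : ℕ) + 1), N * alen D r := by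
        rwa [Finset.sum_range_succ]
    _ ≤ blen D N := Finset.sum_le_sum_of_subset (Finset.range_subset_range.2 j.isLt)

lemma prefix_succ (D : Fin k → Fin l → ℕ) (m : ℕ) :
    prefixList D (m + 1) = prefixList D m ++ blockList D (m + 1) := by
  rw [prefixList, prefixList, List.range_succ, List.flatMap_append]
  simp

lemma prefix_isPrefix (D : Fin k → Fin l → ℕ) {m r : ℕ} (h : m ≤ r) :
    prefixList D m <+: prefixList D r := by
  induction r with
  | zero => simpa [Nat.le_zero.1 h]
  | succ r ih =>
    rcases Nat.lt_or_ge m (r+1) with h' | h'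
    · exact (ih (by omega)).trans ⟨blockList D (r+1), (prefix_succ D r).symm⟩
    · have : m = r + 1 := by omega
      simp [this]

lemma prefix_length (D : Fin k → Fin l → ℕ) (m : ℕ) :
    (prefixList D m).length = ∑ x ∈ Finset.range m, blen D (2 ^ x) := by
  induction m with
  | zero => simp [prefixList]
  | succ m ih =>
    rw [prefix_succ, List.length_append, ih, Finset.sum_range_succ, block_length]
    simp

/-- total atom length -/
lemma blen_mul (D : Fin k → Fin l → ℕ) (N : ℕ) : blen D N = N * blen D 1 := by
  simp [blen, Finset.mul_sum]

lemma self_le_prefix_length (D : Fin k → Fin l → ℕ) (hA : 1 ≤ blen D 1) (m : ℕ) :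
    m ≤ (prefixList D m).length := by
  rw [prefix_length]
  calc m = ∑ _x ∈ Finset.range m, 1 := by simp
    _ ≤ _ := Finset.sum_le_sum fun x _ => by
        rw [blen_mul]
        exact le_trans hA (Nat.le_mul_of_pos_left _ (Nat.two_pow_pos x))

lemma isPrefix_getD {l₁ l₂ : List ℕ} (h : l₁ <+: l₂) {n : ℕ} (hn : n < l₁.length) :
    l₂.getD n 0 = l₁.getD n 0 := by
  rw [List.getD_eq_getElem _ _ hn, List.getD_eq_getElem _ _ (hn.trans_le h.length_le),
    h.getElem hn]

/-- Main evaluation: the value of C at 1-indexed position P+1+s where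
P = |B_1…B_{m-1}| and s < |B_m|. -/
lemma seqC_eval (D : Fin k → Fin l → ℕ) (hA : 1 ≤ blen D 1) {m : ℕ} (hm : 1 ≤ m)
    {s : ℕ} (hs : s < blen D (2 ^ (m - 1))) :
    seqC D ((prefixList D (m - 1)).length + 1 + s) = (blockList D m).getD s 0 := by
  set P := (prefixList D (m - 1)).length with hP
  have hsplit : prefixList D m = prefixList D (m - 1) ++ blockList D m := by
    have := prefix_succ D (m - 1)
    rwa [Nat.sub_add_cancel hm] at this
  have hlenm : (prefixList D m).length = P + blen D (2 ^ (m-1)) := by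
    rw [hsplit, List.length_append, block_length]
  have hmle : m ≤ P + 1 + s := by
    have h1 : m - 1 ≤ P := self_le_prefix_length D hA (m - 1)
    omega
  have hpre : prefixList D m <+: prefixList D (P + 1 + s) := prefix_isPrefix D hmle
  rw [seqC]
  have hidx : P + 1 + s - 1 = P + s := by omega
  rw [hidx]
  have hlt : P + s < (prefixList D m).length := by omega
  rw [isPrefix_getD hpre hlt, hsplit, List.getD_append_right _ _ _ _ (by omega)]
  congr 1
  omega

lemma phi_lt_phi (D : Fin k → Fin l → ℕ) (N : ℕ) {j j' : Fin l} {t t' : ℕ}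
    (ht : t < N) {x x' : Fin k} {a a' : ℕ}
    (ha : a < D x j)
    (hlex : (j : ℕ) < j' ∨ (j = j' ∧ (t < t' ∨ (t = t' ∧
      ((x : ℕ) < x' ∨ (x = x' ∧ a < a')))))) :
    phi' D N j t x a < phi' D N j' t' x' a' := by
  have hoff : aoff D j x + a < alen D j := aoff_lt_alen D j x ha
  rcases hlex with hj | ⟨rfl, hrest⟩
  · have h1 : phi' D N j t x a < ∑ r ∈ Finset.range ((j : ℕ) + 1), N * alen D r := by
      rw [Finset.sum_range_succ, phi', bstart]
      have : t * alen D j + (aoff D j x + a) < (t + 1) * alen D j := by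
        rw [add_one_mul]; omega
      have h2 : (t + 1) * alen D j ≤ N * alen D j := Nat.mul_le_mul_right _ (by omega)
      omega
    have h3 : ∑ r ∈ Finset.range ((j : ℕ) + 1), N * alen D r
        ≤ ∑ r ∈ Finset.range (j' : ℕ), N * alen D r :=
      Finset.sum_le_sum_of_subset (Finset.range_subset_range.2 (by omega))
    have h4 : ∑ r ∈ Finset.range (j' : ℕ), N * alen D r ≤ phi' D N j' t' x' a' := by
      rw [phi', bstart]; omega
    omega
  rcases hrest with htlt | ⟨rfl, hrest⟩
  · have h1 : t * alen D j + (aoff D j x + a) < t' * alen D j := by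
      have : t * alen D j + (aoff D j x + a) < (t + 1) * alen D j := by
        rw [add_one_mul]; omega
      exact this.trans_le (Nat.mul_le_mul_right _ (by omega))
    rw [phi', phi', bstart, bstart]
    omega
  rcases hrest with hxlt | ⟨rfl, halt⟩
  · have h1 : aoff D j x + a < aoff D j x' := by
      have := aoff_mono_add D j hxlt
      rw [De_coe] at this
      omega
    rw [phi', phi']
    have : aoff D j x' ≤ aoff D j x' + a' := Nat.le_add_right _ _
    omega
  · rw [phi', phi']; omega

lemma phi_inj (D : Fin k → Fin l → ℕ) (N : ℕ) {j j' : Fin l} {t t' : ℕ}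
    (ht : t < N) (ht' : t' < N) {x x' : Fin k} {a a' : ℕ}
    (ha : a < D x j) (ha' : a' < D x' j')
    (heq : phi' D N j t x a = phi' D N j' t' x' a') :
    j = j' ∧ t = t' ∧ x = x' ∧ a = a' := by
  rcases lt_trichotomy (j : ℕ) (j' : ℕ) with h | h | h
  · exact absurd heq (Nat.ne_of_lt (phi_lt_phi D N ht ha (Or.inl h)))
  · have hj : j = j' := Fin.ext h
    subst hj
    rcases lt_trichotomy t t' with h2 | h2 | h2
    · exact absurd heq (Nat.ne_of_lt (phi_lt_phi D N ht ha (Or.inr ⟨rfl, Or.inl h2⟩)))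
    · subst h2
      rcases lt_trichotomy (x : ℕ) (x' : ℕ) with h3 | h3 | h3
      · exact absurd heq (Nat.ne_of_lt
          (phi_lt_phi D N ht ha (Or.inr ⟨rfl, Or.inr ⟨rfl, Or.inl h3⟩⟩)))
      · have hx : x = x' := Fin.ext h3
        subst hx
        rcases lt_trichotomy a a' with h4 | h4 | h4
        · exact absurd heq (Nat.ne_of_lt
            (phi_lt_phi D N ht ha (Or.inr ⟨rfl, Or.inr ⟨rfl, Or.inr ⟨rfl, h4⟩⟩⟩)))
        · exact ⟨rfl, rfl, rfl, h4⟩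
        · exact absurd heq.symm (Nat.ne_of_lt
            (phi_lt_phi D N ht' ha' (Or.inr ⟨rfl, Or.inr ⟨rfl, Or.inr ⟨rfl, h4⟩⟩⟩)))
      · exact absurd heq.symm (Nat.ne_of_lt
          (phi_lt_phi D N ht' ha' (Or.inr ⟨rfl, Or.inr ⟨rfl, Or.inl h3⟩⟩)))
    · exact absurd heq.symm (Nat.ne_of_lt (phi_lt_phi D N ht' ha' (Or.inr ⟨rfl, Or.inl h2⟩)))
  · exact absurd heq.symm (Nat.ne_of_lt (phi_lt_phi D N ht' ha' (Or.inl h)))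

lemma sum_ite_Ioi {M : Type*} [AddCommMonoid M] {n : ℕ} (x : Fin n) (f : Fin n → M) :
    (∑ y : Fin n, if x < y then f y else 0) = ∑ y ∈ Finset.Ioi x, f y := by
  rw [← Finset.sum_filter]
  congr 1
  ext y
  simp

lemma sum_xy_Ment (D : Fin k → Fin l → ℕ) (i j : Fin l) :
    (∑ x : Fin k, ∑ y : Fin k, if x < y then D x i * D y j else 0) = Ment D i j := by
  rw [Ment]
  refine Finset.sum_congr rfl fun x _ => ?_
  rw [sum_ite_Ioi, Finset.mul_sum]

lemma pair_count (N : ℕ) (c : ℕ) :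
    (∑ s : Fin N, ∑ t : Fin N, if s < t then c else 0) = N.choose 2 * c := by
  have h1 : ∀ s : Fin N, (∑ t : Fin N, if s < t then c else 0) = (N - 1 - (s : ℕ)) * c := by
    intro s
    rw [sum_ite_Ioi, Finset.sum_const, ← Fin.card_Ioi s, smul_eq_mul]
  rw [Finset.sum_congr rfl fun s _ => h1 s, ← Finset.sum_mul]
  congr 1
  rw [Fin.sum_univ_eq_sum_range (fun r => N - 1 - r) N, Finset.sum_range_reflect (fun r => r) N]
  have h2 := Finset.sum_range_id_mul_two N
  rw [Nat.choose_two_right]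
  omega

lemma pairs_same (N : ℕ) (c : ℕ) {i : Fin l} :
    (∑ s : Fin N, ∑ t : Fin N, if (i < i ∨ (i = i ∧ s < t)) then c else 0)
      = N.choose 2 * c := by
  rw [← pair_count N c]
  refine Finset.sum_congr rfl fun s _ => Finset.sum_congr rfl fun t _ => ?_
  congr 1
  simp [lt_irrefl]

lemma base_sum (D : Fin k → Fin l → ℕ) (N : ℕ) :
    (∑ u : (Fin l × Fin N) × (Fin l × Fin N), ∑ v : Fin k × Fin k,
      if ((u.1.1 < u.2.1 ∨ (u.1.1 = u.2.1 ∧ u.1.2 < u.2.2)) ∧ v.1 < v.2)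
        then D v.1 u.1.1 * D v.2 u.2.1 else 0)
      = N * N * (∑ i : Fin l, ∑ j ∈ Finset.Ioi i, Ment D i j)
        + N.choose 2 * (∑ i : Fin l, Ment D i i) := by
  have step1 : ∀ (c1 : Prop) [Decidable c1] (i j : Fin l),
      (∑ v : Fin k × Fin k, if (c1 ∧ v.1 < v.2) then D v.1 i * D v.2 j else 0)
        = if c1 then Ment D i j else 0 := by
    intro c1 _ i j
    by_cases hc : c1
    · simp only [hc, true_and, if_true]
      rw [Fintype.sum_prod_type, ← sum_xy_Ment D i j]
    · simp [hc]
  have step2 : (∑ u : (Fin l × Fin N) × (Fin l × Fin N), ∑ v : Fin k × Fin k,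
      if ((u.1.1 < u.2.1 ∨ (u.1.1 = u.2.1 ∧ u.1.2 < u.2.2)) ∧ v.1 < v.2)
        then D v.1 u.1.1 * D v.2 u.2.1 else 0)
      = ∑ i : Fin l, ∑ j : Fin l, ∑ s : Fin N, ∑ t : Fin N,
          if (i < j ∨ (i = j ∧ s < t)) then Ment D i j else 0 := by
    rw [Fintype.sum_prod_type]
    rw [Finset.sum_congr rfl fun p _ => Fintype.sum_prod_type
      (f := fun q : Fin l × Fin N => ∑ v : Fin k × Fin k,
        if ((p.1 < q.1 ∨ (p.1 = q.1 ∧ p.2 < q.2)) ∧ v.1 < v.2)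
          then D v.1 p.1 * D v.2 q.1 else 0)]
    rw [Fintype.sum_prod_type]
    refine Finset.sum_congr rfl fun i _ => ?_
    rw [Finset.sum_comm]
    refine Finset.sum_congr rfl fun j _ => Finset.sum_congr rfl fun s _ =>
      Finset.sum_congr rfl fun t _ => step1 _ i j
  rw [step2]
  have step3 : ∀ i : Fin l, (∑ j : Fin l, ∑ s : Fin N, ∑ t : Fin N,
      if (i < j ∨ (i = j ∧ s < t)) then Ment D i j else 0)
      = N * N * (∑ j ∈ Finset.Ioi i, Ment D i j) + N.choose 2 * Ment D i i := by
    intro i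
    have hsplit : ∀ j : Fin l, (∑ s : Fin N, ∑ t : Fin N,
        if (i < j ∨ (i = j ∧ s < t)) then Ment D i j else 0)
        = (if i < j then N * N * Ment D i j else 0)
          + (if j = i then N.choose 2 * Ment D i i else 0) := by
      intro j
      rcases lt_trichotomy i j with h | h | h
      · rw [if_pos h, if_neg (by rintro rfl; exact lt_irrefl _ h)]
        have : ∀ s t : Fin N, (if (i < j ∨ (i = j ∧ s < t)) then Ment D i j else 0)
            = Ment D i j := fun s t => if_pos (Or.inl h)
        rw [Finset.sum_congr rfl fun s _ => Finset.sum_congr rfl fun t _ => this s t]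
        simp [Finset.sum_const, mul_assoc]
      · subst h
        rw [if_neg (lt_irrefl _), if_pos rfl, pairs_same, Nat.zero_add]
      · rw [if_neg (not_lt_of_gt h), if_neg (by rintro rfl; exact lt_irrefl _ h)]
        have : ∀ s t : Fin N, (if (i < j ∨ (i = j ∧ s < t)) then Ment D i j else 0)
            = 0 := by
          intro s t
          rw [if_neg]
          rintro (h' | ⟨rfl, -⟩)
          · exact lt_irrefl _ (h.trans h')
          · exact lt_irrefl _ h
        simp [this]
    rw [Finset.sum_congr rfl fun j _ => hsplit j, Finset.sum_add_distrib]
    congr 1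
    · rw [sum_ite_Ioi i (fun j => N * N * Ment D i j), Finset.mul_sum]
    · rw [Finset.sum_ite_eq' Finset.univ i (fun _ => N.choose 2 * Ment D i i),
        if_pos (Finset.mem_univ i)]
  rw [Finset.sum_congr rfl fun i _ => step3 i, Finset.sum_add_distrib, Finset.mul_sum,
    Finset.mul_sum]

lemma main_count (D : Fin k → Fin l → ℕ) (hA : 1 ≤ blen D 1) {m : ℕ} (hm : 1 ≤ m) :
    2 ^ (2 * m - 2) * (∑ i : Fin l, ∑ j ∈ Finset.Ioi i, Ment D i j) +
      Nat.choose (2 ^ (m - 1)) 2 * (∑ i : Fin l, Ment D i i) ≤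
    edgesBetween D (prefixList D (m - 1)).length (prefixList D m).length
      (prefixList D (m - 1)).length (prefixList D m).length := by
  set N := 2 ^ (m - 1) with hN
  set P := (prefixList D (m - 1)).length with hP
  have hPm : (prefixList D m).length = P + blen D N := by
    have hsplit : prefixList D m = prefixList D (m - 1) ++ blockList D m := by
      have := prefix_succ D (m - 1)
      rwa [Nat.sub_add_cancel hm] at this
    rw [hsplit, List.length_append, block_length]
  classical
  set Q := ((Fin l × Fin N) × (Fin l × Fin N)) × (Fin k × Fin k) with hQ
  set base : Finset Q := Finset.univ.filter (fun q =>
    (q.1.1.1 < q.1.2.1 ∨ (q.1.1.1 = q.1.2.1 ∧ q.1.1.2 < q.1.2.2)) ∧ q.2.1 < q.2.2)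
    with hbase
  set dom : Finset ((_ : Q) × (ℕ × ℕ)) := base.sigma (fun q =>
    Finset.range (D q.2.1 q.1.1.1) ×ˢ Finset.range (D q.2.2 q.1.2.1)) with hdom
  set f : ((_ : Q) × (ℕ × ℕ)) → ℕ × ℕ := fun p =>
    (P + 1 + phi' D N p.1.1.1.1 p.1.1.1.2 p.1.2.1 p.2.1,
     P + 1 + phi' D N p.1.1.2.1 p.1.1.2.2 p.1.2.2 p.2.2) with hf
  -- cardinality of the domain
  have hcard : dom.card
      = N * N * (∑ i : Fin l, ∑ j ∈ Finset.Ioi i, Ment D i j)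
        + N.choose 2 * (∑ i : Fin l, Ment D i i) := by
    rw [hdom, Finset.card_sigma]
    have h1 : ∀ q ∈ base,
        (Finset.range (D q.2.1 q.1.1.1) ×ˢ Finset.range (D q.2.2 q.1.2.1)).card
          = D q.2.1 q.1.1.1 * D q.2.2 q.1.2.1 := by
      intro q _
      rw [Finset.card_product, Finset.card_range, Finset.card_range]
    rw [Finset.sum_congr rfl h1, hbase, Finset.sum_filter, ← base_sum D N]
    rw [Fintype.sum_prod_type]
  -- the target set
  set S : Set (ℕ × ℕ) := {p : ℕ × ℕ | p.1 < p.2 ∧ P < p.1 ∧ p.1 ≤ (prefixList D m).length ∧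
      P < p.2 ∧ p.2 ≤ (prefixList D m).length ∧ seqC D p.1 < seqC D p.2} with hS
  have hfin : S.Finite := by
    apply Set.Finite.subset (((Set.finite_Iic (prefixList D m).length)).prod
      (Set.finite_Iic (prefixList D m).length))
    rintro ⟨p1, p2⟩ hp
    exact ⟨hp.2.2.1, hp.2.2.2.2.1⟩
  -- membership
  have hmem : ∀ p ∈ dom, f p ∈ S := by
    rintro ⟨⟨⟨⟨i, s⟩, ⟨j, t⟩⟩, ⟨x, y⟩⟩, ⟨a, b⟩⟩ hp
    simp only [hdom, Finset.mem_sigma, hbase, Finset.mem_filter, Finset.mem_univ, true_and,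
      Finset.mem_product, Finset.mem_range] at hp
    obtain ⟨⟨hlex, hxy⟩, ha, hb⟩ := hp
    have hb1 : phi' D N i s x a < blen D N := phi_lt_blen D N i s.isLt x ha
    have hb2 : phi' D N j t y b < blen D N := phi_lt_blen D N j t.isLt y hb
    have hval1 : seqC D (P + 1 + phi' D N i s x a) = (x : ℕ) + 1 := by
      rw [hP, seqC_eval D hA hm hb1]
      exact block_getD D m i s.isLt x ha
    have hval2 : seqC D (P + 1 + phi' D N j t y b) = (y : ℕ) + 1 := by
      rw [hP, seqC_eval D hA hm hb2]
      exact block_getD D m j t.isLt y hb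
    have hlt : phi' D N i s x a < phi' D N j t y b := by
      apply phi_lt_phi D N s.isLt ha
      rcases hlex with h | ⟨h1, h2⟩
      · exact Or.inl h
      · exact Or.inr ⟨h1, Or.inl h2⟩
    refine ⟨by simpa [hf] using hlt, by simp only [hf]; omega, ?_, by simp only [hf]; omega,
      ?_, ?_⟩
    · simp only [hf, hPm]; omega
    · simp only [hf, hPm]; omega
    · simp only [hf]
      rw [hval1, hval2]
      have : (x : ℕ) < y := hxy
      omega
  -- injectivity
  have hinj : Set.InjOn f dom := by
    rintro ⟨⟨⟨⟨i, s⟩, ⟨j, t⟩⟩, ⟨x, y⟩⟩, ⟨a, b⟩⟩ hp ⟨⟨⟨⟨i', s'⟩, ⟨j', t'⟩⟩, ⟨x', y'⟩⟩, ⟨a', b'⟩⟩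
      hp' heq
    simp only [Finset.coe_sigma, hdom, Set.mem_sigma_iff, hbase, Finset.coe_filter,
      Set.mem_setOf_eq, Finset.mem_coe, Finset.mem_sigma, Finset.mem_filter,
      Finset.mem_univ, true_and, Finset.mem_product, Finset.mem_range] at hp hp'
    obtain ⟨⟨-, -⟩, ha, hb⟩ := hp
    obtain ⟨⟨-, -⟩, ha', hb'⟩ := hp'
    simp only [hf, Prod.mk.injEq] at heq
    have he1 : phi' D N i s x a = phi' D N i' s' x' a' := by omega
    have he2 : phi' D N j t y b = phi' D N j' t' y' b' := by omega
    obtain ⟨hi, hs, hx, hA1⟩ := phi_inj D N s.isLt s'.isLt ha ha' he1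
    obtain ⟨hj, ht, hy, hB1⟩ := phi_inj D N t.isLt t'.isLt hb hb' he2
    have hs2 : s = s' := Fin.ext hs
    have ht2 : t = t' := Fin.ext ht
    subst hi hj hx hy hA1 hB1 hs2 ht2
    rfl
  -- assemble
  have h2m : 2 ^ (2 * m - 2) = N * N := by
    rw [hN, ← pow_add]
    congr 1
    omega
  rw [edgesBetween, h2m, ← hcard, ← hS]
  calc dom.card = (dom.image f).card := (Finset.card_image_of_injOn hinj).symm
    _ = (↑(dom.image f) : Set (ℕ × ℕ)).ncard := (Set.ncard_coe_finset _).symm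
    _ ≤ S.ncard := by
        apply Set.ncard_le_ncard _ hfin
        intro p hp
        simp only [Finset.coe_image, Set.mem_image, Finset.mem_coe] at hp
        obtain ⟨q, hq, rfl⟩ := hp
        exact hmem q hq

lemma degenerate (D : Fin k → Fin l → ℕ) (hA : blen D 1 = 0) (i j : Fin l) :
    Ment D i j = 0 := by
  have hD : ∀ (x : Fin k) (r : Fin l), D x r = 0 := by
    intro x r
    have h1 : alen D r = 0 := by
      rw [blen] at hA
      have := (Finset.sum_eq_zero_iff.1 hA) (r : ℕ) (Finset.mem_range.2 r.isLt)
      omega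
    rw [alen, aoff] at h1
    have := (Finset.sum_eq_zero_iff.1 h1) (x : ℕ) (Finset.mem_range.2 x.isLt)
    rwa [De_coe] at this
  simp [Ment, hD]

end EP

/-- Lemma 3.3: for `m ≥ 1`, the number of edges of `C` with both positions in the block
`B_m` is at least `2^(2m-2) Σ_{i<j} m_{i,j} + C(2^(m-1),2) Σ_i m_{i,i}`; in particular,
it is at least `(4^m/4) Σ_{i<j} m_{i,j} + (4^m/8) Σ_i m_{i,i} - c_D 2^m` for a constant
`c_D` depending only on `D`. -/
theorem edges_within_block (k l : ℕ) (hk : 2 ≤ k) (hl : 1 ≤ l)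
    (D : Fin k → Fin l → ℕ) :
    (∀ m : ℕ, 1 ≤ m →
      2 ^ (2 * m - 2) * (∑ i : Fin l, ∑ j ∈ Finset.Ioi i, Ment D i j) +
          Nat.choose (2 ^ (m - 1)) 2 * (∑ i : Fin l, Ment D i i) ≤
        edgesBetween D (prefixList D (m - 1)).length (prefixList D m).length
          (prefixList D (m - 1)).length (prefixList D m).length) ∧
    ∃ c_D : ℝ, ∀ m : ℕ, 1 ≤ m →
      (4 : ℝ) ^ m / 4 * (∑ i : Fin l, ∑ j ∈ Finset.Ioi i, (Ment D i j : ℝ)) +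
          (4 : ℝ) ^ m / 8 * (∑ i : Fin l, (Ment D i i : ℝ)) - c_D * 2 ^ m ≤
        (edgesBetween D (prefixList D (m - 1)).length (prefixList D m).length
          (prefixList D (m - 1)).length (prefixList D m).length : ℝ) := by
  have hpart1 : ∀ m : ℕ, 1 ≤ m →
      2 ^ (2 * m - 2) * (∑ i : Fin l, ∑ j ∈ Finset.Ioi i, Ment D i j) +
          Nat.choose (2 ^ (m - 1)) 2 * (∑ i : Fin l, Ment D i i) ≤
        edgesBetween D (prefixList D (m - 1)).length (prefixList D m).length
          (prefixList D (m - 1)).length (prefixList D m).length := by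
    intro m hm
    rcases Nat.eq_zero_or_pos (EP.blen D 1) with hA | hA
    · simp [EP.degenerate D hA]
    · exact EP.main_count D hA hm
  refine ⟨hpart1, ⟨(∑ i : Fin l, (Ment D i i : ℝ)) / 4, ?_⟩⟩
  intro m hm
  have h1 := hpart1 m hm
  have h2 : ((2 ^ (2 * m - 2) * (∑ i : Fin l, ∑ j ∈ Finset.Ioi i, Ment D i j) +
      Nat.choose (2 ^ (m - 1)) 2 * (∑ i : Fin l, Ment D i i) : ℕ) : ℝ)
      ≤ (edgesBetween D (prefixList D (m - 1)).length (prefixList D m).length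
          (prefixList D (m - 1)).length (prefixList D m).length : ℝ) :=
    Nat.cast_le.2 h1
  refine le_trans (le_of_eq ?_) h2
  obtain ⟨e, rfl⟩ : ∃ e, m = e + 1 := ⟨m - 1, by omega⟩
  set Soff : ℝ := ∑ i : Fin l, ∑ j ∈ Finset.Ioi i, (Ment D i j : ℝ)
  set Sdiag : ℝ := ∑ i : Fin l, (Ment D i i : ℝ)
  have hsub1 : 2 * (e + 1) - 2 = 2 * e := by omega
  have hsub2 : e + 1 - 1 = e := by omega
  rw [hsub1, hsub2]
  set N : ℕ := 2 ^ e with hN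
  have hNpos : 1 ≤ N := Nat.one_le_two_pow
  have hch : 2 * (N.choose 2) = N * (N - 1) := by
    rw [Nat.choose_two_right]
    have : 2 ∣ N * (N - 1) := (Nat.even_mul_pred_self N).two_dvd
    omega
  have hchR : (N.choose 2 : ℝ) = ((N : ℝ) * ((N : ℝ) - 1)) / 2 := by
    have := congrArg (fun n : ℕ => (n : ℝ)) hch
    push_cast [Nat.cast_sub hNpos] at this
    linarith
  have hX : ((N : ℝ)) = 2 ^ e := by rw [hN]; push_cast; ring
  push_cast
  rw [hchR, hX]
  set X : ℝ := (2:ℝ)^e with hXdef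
  have e1 : (4:ℝ)^(e+1) = X*X*4 := by
    rw [show (4:ℝ) = 2*2 by norm_num, mul_pow, pow_succ, hXdef]; ring
  have e2 : (2:ℝ)^(2*e) = X*X := by rw [two_mul, pow_add, hXdef]
  have e3 : (2:ℝ)^(e+1) = 2*X := by rw [pow_succ, hXdef]; ring
  rw [e1, e2, e3]
  ring
end

section
/- Let k ≥ 2 and l ≥ 1 be integers, let D be a k×l matrix of nonnegative integers, and let C and M be as defined from D. Fix integers m ≥ 1, t ∈ {1,...,l}, and 0 ≤ s ≤ 2^m, and consider the partial block of B_{m+1} consisting of its first 2^m copies of D_1, ..., 2^m copies of D_{t−1}, followed by its first s copies of D_t. Then the number of edges (i,j) of C with position i lying in B_1 B_2 ⋯ B_m and position j lying in this partial block equals (2^m − 1) · 2^m · Σ_{i=1}^{l} Σ_{j=1}^{t−1} m_{i,j} + (2^m − 1) · s · Σ_{i=1}^{l} m_{i,t}, where the sum over j from 1 to t−1 is 0 when t = 1. -/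
open Filter

/-- The length of the partial block of `B_{m+1}` consisting of its first `2^m` copies of
each of `D_1, …, D_{t-1}` followed by its first `s` copies of `D_t`. -/
def partialLen {k l : ℕ} (D : Fin k → Fin l → ℕ) (m : ℕ) (t : Fin l) (s : ℕ) : ℕ :=
  2 ^ m * (∑ j ∈ Finset.Iio t, (atomList D j).length) + s * (atomList D t).length

namespace EdgesAux

/-- Count of increasing pairs across two lists. -/
def E (A B : List ℕ) : ℕ := (A.map fun a => B.countP fun b => a < b).sum

lemma E_cons (a : ℕ) (A B : List ℕ) : E (a :: A) B = B.countP (fun b => a < b) + E A B := rfl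

lemma E_append_left (A₁ A₂ B : List ℕ) : E (A₁ ++ A₂) B = E A₁ B + E A₂ B := by
  simp [E]

lemma E_append_right (A B₁ B₂ : List ℕ) : E A (B₁ ++ B₂) = E A B₁ + E A B₂ := by
  induction A with
  | nil => rfl
  | cons a A ih => simp only [E_cons, ih, List.countP_append]; ring

lemma E_flatten_left (L : List (List ℕ)) (B : List ℕ) :
    E L.flatten B = (L.map fun A => E A B).sum := by
  induction L with
  | nil => rfl
  | cons A L ih => simp [List.flatten_cons, E_append_left, ih]

lemma E_flatten_right (A : List ℕ) (L : List (List ℕ)) :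
    E A L.flatten = (L.map fun B => E A B).sum := by
  induction L with
  | nil => simp [E]
  | cons B L ih => simp [List.flatten_cons, E_append_right, ih]

lemma E_flatMap_left {α : Type*} (L : List α) (f : α → List ℕ) (B : List ℕ) :
    E (L.flatMap f) B = (L.map fun a => E (f a) B).sum := by
  induction L with
  | nil => rfl
  | cons a L ih => simp [List.flatMap_cons, E_append_left, ih]

lemma E_flatMap_right {α : Type*} (A : List ℕ) (L : List α) (f : α → List ℕ) :
    E A (L.flatMap f) = (L.map fun a => E A (f a)).sum := by
  induction L with
  | nil => simp [E]
  | cons a L ih => simp [List.flatMap_cons, E_append_right, ih]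

lemma E_replicate_flatten_left (n : ℕ) (A B : List ℕ) :
    E (List.replicate n A).flatten B = n * E A B := by
  rw [E_flatten_left]; simp [List.map_replicate, List.sum_replicate, smul_eq_mul]

lemma E_replicate_flatten_right (n : ℕ) (A B : List ℕ) :
    E A (List.replicate n B).flatten = n * E A B := by
  rw [E_flatten_right]; simp [List.map_replicate, List.sum_replicate, smul_eq_mul]

lemma E_replicate_left (n x : ℕ) (B : List ℕ) :
    E (List.replicate n x) B = n * B.countP (fun b => x < b) := by
  simp [E, List.map_replicate, List.sum_replicate, smul_eq_mul]

lemma countP_flatMap {α : Type*} (L : List α) (f : α → List ℕ) (p : ℕ → Bool) :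
    (L.flatMap f).countP p = (L.map fun a => (f a).countP p).sum := by
  induction L with
  | nil => rfl
  | cons a L ih => simp [List.flatMap_cons, List.countP_append, ih]

lemma countP_atom {k l : ℕ} (D : Fin k → Fin l → ℕ) (j : Fin l) (a : ℕ) :
    (atomList D j).countP (fun b => a < b) =
      ∑ y : Fin k, if a < (y : ℕ) + 1 then D y j else 0 := by
  rw [atomList, countP_flatMap, Fin.sum_univ_def]
  congr 1
  apply List.map_congr_left
  intro y _
  simp [List.countP_replicate]

lemma E_atom {k l : ℕ} (D : Fin k → Fin l → ℕ) (i j : Fin l) :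
    E (atomList D i) (atomList D j) = Ment D i j := by
  rw [atomList, E_flatMap_left, Ment, Fin.sum_univ_def]
  congr 1
  apply List.map_congr_left
  intro x _
  rw [E_replicate_left, countP_atom]
  congr 1
  rw [← Finset.sum_filter]
  congr 1
  ext y
  simp only [Finset.mem_filter, Finset.mem_univ, true_and, Finset.mem_Ioi, Fin.lt_def]
  omega

lemma two_pow_sum (n : ℕ) : ∑ x ∈ Finset.range n, 2 ^ x = 2 ^ n - 1 := by
  induction n with
  | zero => rfl
  | succ n ih =>
    rw [Finset.sum_range_succ, ih, pow_succ]
    have : 1 ≤ 2 ^ n := Nat.one_le_two_pow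
    omega

end EdgesAux

namespace EdgesAux

lemma length_flatMap' {α : Type*} (L : List α) (f : α → List ℕ) :
    (L.flatMap f).length = (L.map fun a => (f a).length).sum := by
  induction L with
  | nil => rfl
  | cons a L ih => simp [List.flatMap_cons, ih]

lemma blockList_len {k l : ℕ} (D : Fin k → Fin l → ℕ) (n : ℕ) :
    (blockList D n).length = 2 ^ (n - 1) * ∑ j : Fin l, (atomList D j).length := by
  rw [blockList, length_flatMap', Fin.sum_univ_def, ← List.sum_map_mul_left]
  congr 1
  apply List.map_congr_left
  intro j _
  simp [List.length_flatten, List.map_replicate, List.sum_replicate, smul_eq_mul]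

lemma prefixList_succ {k l : ℕ} (D : Fin k → Fin l → ℕ) (n : ℕ) :
    prefixList D (n + 1) = prefixList D n ++ blockList D (n + 1) := by
  rw [prefixList, prefixList, List.range_succ, List.flatMap_append]
  simp

lemma prefixList_len {k l : ℕ} (D : Fin k → Fin l → ℕ) (n : ℕ) :
    (prefixList D n).length = (2 ^ n - 1) * ∑ j : Fin l, (atomList D j).length := by
  induction n with
  | zero => simp [prefixList]
  | succ n ih =>
    rw [prefixList_succ, List.length_append, ih, blockList_len]
    have h1 : 1 ≤ 2 ^ n := Nat.one_le_two_pow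
    have h2 : 2 ^ (n + 1) = 2 * 2 ^ n := by rw [pow_succ]; ring
    simp only [Nat.add_sub_cancel]
    rw [← Nat.add_mul]
    congr 1
    omega

lemma prefixList_prefix {k l : ℕ} (D : Fin k → Fin l → ℕ) {a b : ℕ} (h : a ≤ b) :
    prefixList D a <+: prefixList D b := by
  induction b with
  | zero => simp_all
  | succ b ih =>
    rcases Nat.lt_or_ge a (b + 1) with h' | h'
    · exact (ih (by omega)).trans (by rw [prefixList_succ]; exact List.prefix_append _ _)
    · have : a = b + 1 := by omega
      subst this
      exact List.prefix_refl _

lemma getD_of_prefix {A B : List ℕ} (h : A <+: B) {n : ℕ} (hn : n < A.length) :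
    A.getD n 0 = B.getD n 0 := by
  rcases h with ⟨r, rfl⟩
  exact (List.getD_append _ _ _ _ hn).symm

lemma seqC_eq {k l : ℕ} (D : Fin k → Fin l → ℕ)
    (hS : 0 < ∑ j : Fin l, (atomList D j).length) (n r : ℕ) (h1 : 1 ≤ r)
    (h2 : r ≤ (prefixList D n).length) :
    seqC D r = (prefixList D n).getD (r - 1) 0 := by
  have hr : r ≤ (prefixList D r).length := by
    rw [prefixList_len]
    have h3 : r < 2 ^ r := Nat.lt_two_pow_self
    calc r ≤ (2 ^ r - 1) * 1 := by omega
    _ ≤ (2 ^ r - 1) * ∑ j : Fin l, (atomList D j).length := by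
        exact Nat.mul_le_mul_left _ hS
  have p1 : prefixList D r <+: prefixList D (max n r) := prefixList_prefix D (le_max_right _ _)
  have p2 : prefixList D n <+: prefixList D (max n r) := prefixList_prefix D (le_max_left _ _)
  rw [seqC, getD_of_prefix p1 (by omega), getD_of_prefix p2 (by omega)]

lemma countP_eq_sum (B : List ℕ) (p : ℕ → Bool) :
    B.countP p = ∑ b ∈ Finset.range B.length, if p (B.getD b 0) then 1 else 0 := by
  induction B with
  | nil => rfl
  | cons b B ih =>
    rw [List.countP_cons, List.length_cons, Finset.sum_range_succ']
    simp only [List.getD_cons_succ, List.getD_cons_zero]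
    rw [ih]

lemma E_eq_sum (A B : List ℕ) :
    E A B = ∑ a ∈ Finset.range A.length, ∑ b ∈ Finset.range B.length,
      if A.getD a 0 < B.getD b 0 then 1 else 0 := by
  induction A with
  | nil => rfl
  | cons a A ih =>
    rw [E_cons, List.length_cons, Finset.sum_range_succ']
    simp only [List.getD_cons_succ, List.getD_cons_zero]
    rw [ih, countP_eq_sum]
    simp only [decide_eq_true_eq]
    ring
end EdgesAux

namespace EdgesAux

def atomN {k l : ℕ} (D : Fin k → Fin l → ℕ) (n : ℕ) : List ℕ :=
  if h : n < l then atomList D ⟨n, h⟩ else []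

def partialList {k l : ℕ} (D : Fin k → Fin l → ℕ) (m : ℕ) (t : Fin l) (s : ℕ) : List ℕ :=
  ((List.range (t : ℕ)).flatMap fun n => (List.replicate (2 ^ m) (atomN D n)).flatten) ++
    (List.replicate s (atomList D t)).flatten

lemma sum_Iio_fin {l : ℕ} (t : Fin l) (g : ℕ → ℕ) (f : Fin l → ℕ)
    (hg : ∀ j : Fin l, j < t → g (j : ℕ) = f j) :
    ∑ n ∈ Finset.range (t : ℕ), g n = ∑ j ∈ Finset.Iio t, f j := by
  rw [← Nat.Iio_eq_range, ← Fin.map_valEmbedding_Iio, Finset.sum_map]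
  apply Finset.sum_congr rfl
  intro j hj
  exact hg j (Finset.mem_Iio.mp hj)

lemma atomN_coe {k l : ℕ} (D : Fin k → Fin l → ℕ) (j : Fin l) :
    atomN D (j : ℕ) = atomList D j := by
  rw [atomN, dif_pos j.isLt]

lemma blockList_eq_range {k l : ℕ} (D : Fin k → Fin l → ℕ) (m : ℕ) :
    blockList D (m + 1) =
      (List.range l).flatMap fun n => (List.replicate (2 ^ m) (atomN D n)).flatten := by
  rw [blockList, ← (show (List.finRange l).map (fun i : Fin l => (i : ℕ)) = List.range l from
    List.ext_getElem (by simp) (by simp)), List.flatMap_map]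
  simp only [Nat.add_sub_cancel]
  congr 1
  funext j
  rw [atomN_coe]

lemma partial_decomp {k l : ℕ} (D : Fin k → Fin l → ℕ) (m : ℕ) (t : Fin l) (s : ℕ)
    (hs : s ≤ 2 ^ m) :
    blockList D (m + 1) = partialList D m t s ++
      ((List.replicate (2 ^ m - s) (atomList D t)).flatten ++
       ((List.range (l - (t : ℕ) - 1)).flatMap fun n =>
         (List.replicate (2 ^ m) (atomN D ((t : ℕ) + (n + 1)))).flatten)) := by
  have hl' : (t : ℕ) < l := t.isLt
  have hr : List.range l = List.range (t : ℕ) ++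
      ((t : ℕ) :: (List.range (l - (t : ℕ) - 1)).map fun n => (t : ℕ) + (n + 1)) := by
    conv_lhs => rw [show l = (t : ℕ) + ((l - (t : ℕ) - 1) + 1) from by omega]
    rw [List.range_add, List.range_succ_eq_map]
    simp [List.map_map, Function.comp]
  rw [blockList_eq_range, hr, List.flatMap_append, List.flatMap_cons, List.flatMap_map]
  rw [atomN_coe, show List.replicate (2 ^ m) (atomList D t) =
    List.replicate s (atomList D t) ++ List.replicate (2 ^ m - s) (atomList D t) from by
      rw [← List.replicate_add]; congr 1; omega, List.flatten_append]
  rw [partialList]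
  simp [List.append_assoc, Function.comp]

lemma partialList_length {k l : ℕ} (D : Fin k → Fin l → ℕ) (m : ℕ) (t : Fin l) (s : ℕ) :
    (partialList D m t s).length = partialLen D m t s := by
  rw [partialList, partialLen, List.length_append, length_flatMap']
  congr 1
  · rw [show ((List.range (t:ℕ)).map fun n => ((List.replicate (2 ^ m) (atomN D n)).flatten).length).sum
        = ∑ n ∈ Finset.range (t:ℕ), ((List.replicate (2 ^ m) (atomN D n)).flatten).length from rfl]
    rw [Finset.mul_sum]
    apply sum_Iio_fin
    intro j _
    rw [atomN_coe]
    simp [List.length_flatten, List.map_replicate, List.sum_replicate, smul_eq_mul]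
  · simp [List.length_flatten, List.map_replicate, List.sum_replicate, smul_eq_mul]

end EdgesAux

namespace EdgesAux

lemma edges_eq_E {k l : ℕ} (D : Fin k → Fin l → ℕ)
    (hS : 0 < ∑ j : Fin l, (atomList D j).length) (m : ℕ) (Q : List ℕ)
    (hQ : prefixList D m ++ Q <+: prefixList D (m + 1)) :
    edgesBetween D 0 (prefixList D m).length (prefixList D m).length
      ((prefixList D m).length + Q.length) = E (prefixList D m) Q := by
  classical
  set P := prefixList D m with hP
  set L1 := P.length with hL1
  set L2 := Q.length with hL2
  have hL1' : L1 = (prefixList D m).length := rfl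
  have key1 : ∀ a, a < L1 → seqC D (1 + a) = P.getD a 0 := by
    intro a ha
    have h := seqC_eq D hS m (1 + a) (by omega) (by omega)
    rw [h]
    congr 1
    omega
  have hlen : L1 + L2 ≤ (prefixList D (m + 1)).length := by
    have := hQ.length_le
    simpa [hL1, hL2] using this
  have key2 : ∀ b, b < L2 → seqC D (L1 + 1 + b) = Q.getD b 0 := by
    intro b hb
    have h := seqC_eq D hS (m + 1) (L1 + 1 + b) (by omega) (by omega)
    rw [h, show L1 + 1 + b - 1 = L1 + b from by omega,
      ← getD_of_prefix hQ (n := L1 + b) (by simp only [List.length_append, ← hL1, ← hL2]; omega),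
      List.getD_append_right _ _ _ _ (by omega : P.length ≤ L1 + b)]
    congr 1
    omega
  rw [edgesBetween]
  have hset : {p : ℕ × ℕ | p.1 < p.2 ∧ 0 < p.1 ∧ p.1 ≤ L1 ∧ L1 < p.2 ∧ p.2 ≤ L1 + L2 ∧
      seqC D p.1 < seqC D p.2} =
      ↑(((Finset.Icc 1 L1) ×ˢ (Finset.Icc (L1 + 1) (L1 + L2))).filter fun p =>
        seqC D p.1 < seqC D p.2) := by
    ext ⟨a, b⟩
    simp only [Set.mem_setOf_eq, Finset.coe_filter, Finset.mem_product, Finset.mem_Icc]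
    constructor
    · rintro ⟨h1, h2, h3, h4, h5, h6⟩
      exact ⟨⟨⟨by omega, by omega⟩, by omega, by omega⟩, h6⟩
    · rintro ⟨⟨⟨h1, h2⟩, h3, h4⟩, h5⟩
      exact ⟨by omega, by omega, by omega, by omega, by omega, h5⟩
  rw [hset, Set.ncard_coe_finset, Finset.card_filter, Finset.sum_product, E_eq_sum,
    show Finset.Icc 1 L1 = Finset.Ico 1 (L1 + 1) from by rw [Finset.Ico_add_one_right_eq_Icc],
    Finset.sum_Ico_eq_sum_range, show L1 + 1 - 1 = L1 from by omega]
  apply Finset.sum_congr rfl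
  intro a ha
  rw [show Finset.Icc (L1 + 1) (L1 + L2) = Finset.Ico (L1 + 1) (L1 + L2 + 1) from by
      rw [Finset.Ico_add_one_right_eq_Icc],
    Finset.sum_Ico_eq_sum_range, show L1 + L2 + 1 - (L1 + 1) = L2 from by omega]
  apply Finset.sum_congr rfl
  intro b hb
  rw [key1 a (Finset.mem_range.mp ha), key2 b (Finset.mem_range.mp hb)]

lemma E_prefix_partial {k l : ℕ} (D : Fin k → Fin l → ℕ) (m : ℕ) (t : Fin l) (s : ℕ) :
    E (prefixList D m) (partialList D m t s) =
      (2 ^ m - 1) * 2 ^ m * (∑ i : Fin l, ∑ j ∈ Finset.Iio t, Ment D i j) +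
        (2 ^ m - 1) * s * (∑ i : Fin l, Ment D i t) := by
  have hblock : ∀ (x : ℕ) (B : List ℕ), E (blockList D (x + 1)) B
      = 2 ^ x * ∑ j : Fin l, E (atomList D j) B := by
    intro x B
    rw [blockList, E_flatMap_left, Fin.sum_univ_def, Nat.add_sub_cancel, ← List.sum_map_mul_left]
    congr 1
    apply List.map_congr_left
    intro j _
    rw [E_replicate_flatten_left]
  have hatom : ∀ i : Fin l, E (atomList D i) (partialList D m t s)
      = 2 ^ m * (∑ j ∈ Finset.Iio t, Ment D i j) + s * Ment D i t := by
    intro i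
    rw [partialList, E_append_right, E_flatMap_right, E_replicate_flatten_right, E_atom]
    congr 1
    rw [show ((List.range (t : ℕ)).map fun n =>
        E (atomList D i) ((List.replicate (2 ^ m) (atomN D n)).flatten)).sum
        = ∑ n ∈ Finset.range (t : ℕ),
          E (atomList D i) ((List.replicate (2 ^ m) (atomN D n)).flatten) from rfl,
      Finset.mul_sum]
    apply sum_Iio_fin
    intro j _
    rw [atomN_coe, E_replicate_flatten_right, E_atom]
  rw [prefixList, E_flatMap_left,
    show ((List.range m).map fun x => E (blockList D (x + 1)) (partialList D m t s)).sum
      = ∑ x ∈ Finset.range m, E (blockList D (x + 1)) (partialList D m t s) from rfl]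
  simp only [hblock, hatom]
  rw [← Finset.sum_mul, two_pow_sum, Finset.sum_add_distrib, ← Finset.mul_sum, ← Finset.mul_sum]
  ring

end EdgesAux

/-- Lemma 3.4: the number of edges of `C` with one position in `B_1 B_2 ⋯ B_m` and the
other position in the partial block of `B_{m+1}` (its first `2^m` copies of each of
`D_1, …, D_{t-1}` followed by its first `s` copies of `D_t`) equals
`(2^m - 1) 2^m Σ_{i=1}^{l} Σ_{j=1}^{t-1} m_{i,j} + (2^m - 1) s Σ_{i=1}^{l} m_{i,t}`. -/
theorem edges_blocks_to_partial_block (k l : ℕ) (hk : 2 ≤ k) (hl : 1 ≤ l)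
    (D : Fin k → Fin l → ℕ) (m : ℕ) (hm : 1 ≤ m) (t : Fin l) (s : ℕ) (hs : s ≤ 2 ^ m) :
    edgesBetween D 0 (prefixList D m).length
        (prefixList D m).length ((prefixList D m).length + partialLen D m t s) =
      (2 ^ m - 1) * 2 ^ m * (∑ i : Fin l, ∑ j ∈ Finset.Iio t, Ment D i j) +
        (2 ^ m - 1) * s * (∑ i : Fin l, Ment D i t) := by
  classical
  by_cases hS : (∑ j : Fin l, (atomList D j).length) = 0
  · have hA : ∀ j : Fin l, (atomList D j).length = 0 := fun j =>
      Finset.sum_eq_zero_iff.mp hS j (Finset.mem_univ j)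
    have hD : ∀ (x : Fin k) (j : Fin l), D x j = 0 := by
      intro x j
      have h1 : (atomList D j).length = ∑ x : Fin k, D x j := by
        rw [atomList, EdgesAux.length_flatMap', Fin.sum_univ_def]
        congr 1
        apply List.map_congr_left
        intro y _
        simp
      have h2 := hA j
      rw [h1] at h2
      exact Finset.sum_eq_zero_iff.mp h2 x (Finset.mem_univ x)
    have hM : ∀ i j : Fin l, Ment D i j = 0 := by
      intro i j
      simp [Ment, hD]
    have hP0 : (prefixList D m).length = 0 := by
      rw [EdgesAux.prefixList_len, hS, mul_zero]
    rw [hP0]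
    simp only [hM, Finset.sum_const_zero, mul_zero, add_zero]
    rw [edgesBetween]
    convert Set.ncard_empty (ℕ × ℕ) using 2
    ext ⟨a, b⟩
    simp only [Set.mem_setOf_eq, Set.mem_empty_iff_false, iff_false, not_and]
    intro _ h2 h3
    omega
  · have hS' : 0 < ∑ j : Fin l, (atomList D j).length := Nat.pos_of_ne_zero hS
    have hpre : prefixList D m ++ EdgesAux.partialList D m t s <+: prefixList D (m + 1) := by
      rw [EdgesAux.prefixList_succ, EdgesAux.partial_decomp D m t s hs]
      exact ⟨_, List.append_assoc _ _ _⟩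
    rw [show partialLen D m t s = (EdgesAux.partialList D m t s).length from
        (EdgesAux.partialList_length D m t s).symm,
      EdgesAux.edges_eq_E D hS' m _ hpre, EdgesAux.E_prefix_partial]
end

section
/- Let k ≥ 2 and l ≥ 1 be integers, let D be a k×l matrix of nonnegative integers, and let C and M be as defined from D. Fix integers m ≥ 1, t ∈ {1,...,l}, and 0 ≤ s ≤ 2^m, and consider the partial block of B_{m+1} consisting of its first 2^m copies of D_1, ..., 2^m copies of D_{t−1}, followed by its first s copies of D_t. Then the number of edges (i,j) of C with both positions i and j lying in this partial block is at least binom(2^m, 2) · Σ_{j=1}^{t−1} m_{j,j} + 4^m · Σ_{i=1}^{t−2} Σ_{j=i+1}^{t−1} m_{i,j} + binom(s, 2) · m_{t,t} + s · 2^m · Σ_{i=1}^{t−1} m_{i,t}, where any sum with empty index range is 0. -/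
open Filter

def pairsSum (L : List ℕ) : ℕ :=
  ∑ j ∈ Finset.range L.length, ∑ i ∈ Finset.range j, if L.getD i 0 < L.getD j 0 then 1 else 0

def crossSum (A B : List ℕ) : ℕ :=
  ∑ i ∈ Finset.range A.length, ∑ j ∈ Finset.range B.length, if A.getD i 0 < B.getD j 0 then 1 else 0

lemma crossSum_append_left (A1 A2 B : List ℕ) :
    crossSum (A1 ++ A2) B = crossSum A1 B + crossSum A2 B := by
  unfold crossSum
  rw [List.length_append, Finset.sum_range_add]
  congr 1
  · exact Finset.sum_congr rfl fun i hi => by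
      rw [List.getD_append _ _ _ _ (Finset.mem_range.mp hi)]
  · exact Finset.sum_congr rfl fun i _ => by
      rw [List.getD_append_right _ _ _ _ (Nat.le_add_right _ _), Nat.add_sub_cancel_left]

lemma crossSum_append_right (A B1 B2 : List ℕ) :
    crossSum A (B1 ++ B2) = crossSum A B1 + crossSum A B2 := by
  unfold crossSum
  rw [← Finset.sum_add_distrib]
  refine Finset.sum_congr rfl fun i _ => ?_
  rw [List.length_append, Finset.sum_range_add]
  congr 1
  · exact Finset.sum_congr rfl fun j hj => by
      rw [List.getD_append _ _ _ _ (Finset.mem_range.mp hj)]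
  · exact Finset.sum_congr rfl fun j _ => by
      rw [List.getD_append_right _ _ _ _ (Nat.le_add_right _ _), Nat.add_sub_cancel_left]

lemma pairsSum_append (A B : List ℕ) :
    pairsSum (A ++ B) = pairsSum A + pairsSum B + crossSum A B := by
  unfold pairsSum crossSum
  rw [List.length_append, Finset.sum_range_add]
  have h1 : ∀ j ∈ Finset.range A.length,
      (∑ i ∈ Finset.range j, if (A ++ B).getD i 0 < (A ++ B).getD j 0 then 1 else 0) =
      ∑ i ∈ Finset.range j, if A.getD i 0 < A.getD j 0 then 1 else 0 := by
    intro j hj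
    refine Finset.sum_congr rfl fun i hi => ?_
    rw [List.getD_append _ _ _ _ (Finset.mem_range.mp hj),
      List.getD_append _ _ _ _ (lt_trans (Finset.mem_range.mp hi) (Finset.mem_range.mp hj))]
  rw [Finset.sum_congr rfl h1]
  have h2 : ∀ j ∈ Finset.range B.length,
      (∑ i ∈ Finset.range (A.length + j), if (A ++ B).getD i 0 < (A ++ B).getD (A.length + j) 0 then 1 else 0) =
      (∑ i ∈ Finset.range j, if B.getD i 0 < B.getD j 0 then 1 else 0) +
      ∑ i ∈ Finset.range A.length, if A.getD i 0 < B.getD j 0 then 1 else 0 := by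
    intro j hj
    rw [List.getD_append_right A B 0 (A.length + j) (Nat.le_add_right _ _),
      Nat.add_sub_cancel_left, Finset.sum_range_add, Nat.add_comm]
    congr 1
    · refine Finset.sum_congr rfl fun i hi => ?_
      rw [List.getD_append_right _ _ _ _ (Nat.le_add_right _ _), Nat.add_sub_cancel_left]
    · refine Finset.sum_congr rfl fun i hi => ?_
      rw [List.getD_append _ _ _ _ (Finset.mem_range.mp hi)]
  rw [Finset.sum_congr rfl h2, Finset.sum_add_distrib, Finset.sum_comm]
  ring

lemma crossSum_nil_left (B : List ℕ) : crossSum [] B = 0 := by simp [crossSum]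

lemma crossSum_nil_right (A : List ℕ) : crossSum A [] = 0 := by simp [crossSum]

lemma crossSum_flatMap_left {α : Type*} (xs : List α) (f : α → List ℕ) (B : List ℕ) :
    crossSum (xs.flatMap f) B = (xs.map fun x => crossSum (f x) B).sum := by
  induction xs with
  | nil => simp [crossSum_nil_left]
  | cons a tl ih => rw [List.flatMap_cons, crossSum_append_left, List.map_cons, List.sum_cons, ih]

lemma crossSum_flatMap_right {α : Type*} (A : List ℕ) (xs : List α) (f : α → List ℕ) :
    crossSum A (xs.flatMap f) = (xs.map fun x => crossSum A (f x)).sum := by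
  induction xs with
  | nil => simp [crossSum_nil_right]
  | cons a tl ih => rw [List.flatMap_cons, crossSum_append_right, List.map_cons, List.sum_cons, ih]

lemma crossSum_flatten_replicate_left (n : ℕ) (A B : List ℕ) :
    crossSum (List.replicate n A).flatten B = n * crossSum A B := by
  induction n with
  | zero => simp [crossSum_nil_left]
  | succ n ih =>
    rw [List.replicate_succ, List.flatten_cons, crossSum_append_left, ih]
    ring

lemma crossSum_flatten_replicate_right (n : ℕ) (A B : List ℕ) :
    crossSum A (List.replicate n B).flatten = n * crossSum A B := by
  induction n with
  | zero => simp [crossSum_nil_right]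
  | succ n ih =>
    rw [List.replicate_succ, List.flatten_cons, crossSum_append_right, ih]
    ring

lemma pairsSum_flatten_replicate (n : ℕ) (A : List ℕ) :
    Nat.choose n 2 * crossSum A A ≤ pairsSum (List.replicate n A).flatten := by
  induction n with
  | zero => simp
  | succ n ih =>
    rw [List.replicate_succ, List.flatten_cons, pairsSum_append,
      crossSum_flatten_replicate_right]
    have : Nat.choose (n+1) 2 = Nat.choose n 2 + n := by
      rw [Nat.choose_succ_succ]
      simp [Nat.choose_one_right, Nat.add_comm]
    rw [this, Nat.add_mul]
    omega

lemma getD_replicate' {n v i : ℕ} (h : i < n) : (List.replicate n v).getD i 0 = v := by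
  rw [List.getD_eq_getElem?_getD, List.getElem?_replicate, if_pos h, Option.getD_some]

lemma crossSum_replicate_replicate (a b v w : ℕ) :
    crossSum (List.replicate a v) (List.replicate b w) =
      if v < w then a * b else 0 := by
  unfold crossSum
  simp only [List.length_replicate]
  rw [Finset.sum_congr rfl (fun i hi => Finset.sum_congr rfl (fun j hj => by
    rw [getD_replicate' (Finset.mem_range.mp hi), getD_replicate' (Finset.mem_range.mp hj)]))]
  by_cases h : v < w
  · simp [h, Finset.sum_const, Nat.mul_comm]
  · simp [h]



lemma crossSum_atom {k l : ℕ} (D : Fin k → Fin l → ℕ) (i j : Fin l) :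
    crossSum (atomList D i) (atomList D j) = Ment D i j := by
  unfold atomList Ment
  rw [crossSum_flatMap_left, ← Fin.sum_univ_def]
  refine Finset.sum_congr rfl fun x _ => ?_
  rw [crossSum_flatMap_right, ← Fin.sum_univ_def]
  have : ∀ y : Fin k, crossSum (List.replicate (D x i) ((x:ℕ)+1)) (List.replicate (D y j) ((y:ℕ)+1))
      = if x < y then D x i * D y j else 0 := by
    intro y
    rw [crossSum_replicate_replicate]
    refine if_congr ?_ rfl rfl
    exact ⟨fun h => Fin.lt_def.mpr (by omega), fun h => by have := Fin.lt_def.mp h; omega⟩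
  rw [Finset.sum_congr rfl fun y _ => this y, Finset.mul_sum, ← Finset.sum_filter,
    Finset.filter_lt_eq_Ioi]

def atomF {k l : ℕ} (D : Fin k → Fin l → ℕ) (i : ℕ) : List ℕ :=
  if h : i < l then atomList D ⟨i, h⟩ else []

def headPart {k l : ℕ} (D : Fin k → Fin l → ℕ) (c n : ℕ) : List ℕ :=
  (List.range n).flatMap fun i => (List.replicate c (atomF D i)).flatten

lemma headPart_succ {k l : ℕ} (D : Fin k → Fin l → ℕ) (c n : ℕ) :
    headPart D c (n+1) = headPart D c n ++ (List.replicate c (atomF D n)).flatten := by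
  unfold headPart
  rw [List.range_succ, List.flatMap_append, List.flatMap_cons, List.flatMap_nil, List.append_nil]

lemma crossSum_headPart_left {k l : ℕ} (D : Fin k → Fin l → ℕ) (c n : ℕ) (B : List ℕ) :
    crossSum (headPart D c n) B = c * ∑ i ∈ Finset.range n, crossSum (atomF D i) B := by
  induction n with
  | zero => simp [headPart, crossSum_nil_left]
  | succ n ih =>
    rw [headPart_succ, crossSum_append_left, ih, crossSum_flatten_replicate_left,
      Finset.sum_range_succ, Nat.mul_add]

lemma pairsSum_headPart {k l : ℕ} (D : Fin k → Fin l → ℕ) (c n : ℕ) :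
    Nat.choose c 2 * (∑ i ∈ Finset.range n, crossSum (atomF D i) (atomF D i)) +
      (c * c) * (∑ i ∈ Finset.range n, ∑ j ∈ Finset.Ico (i+1) n, crossSum (atomF D i) (atomF D j))
      ≤ pairsSum (headPart D c n) := by
  induction n with
  | zero => simp [headPart, pairsSum]
  | succ n ih =>
    rw [headPart_succ, pairsSum_append, crossSum_headPart_left]
    have h1 : Nat.choose c 2 * crossSum (atomF D n) (atomF D n)
        ≤ pairsSum (List.replicate c (atomF D n)).flatten := pairsSum_flatten_replicate _ _
    have h2 : ∑ i ∈ Finset.range (n+1), ∑ j ∈ Finset.Ico (i+1) (n+1), crossSum (atomF D i) (atomF D j)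
        = (∑ i ∈ Finset.range n, ∑ j ∈ Finset.Ico (i+1) n, crossSum (atomF D i) (atomF D j))
          + ∑ i ∈ Finset.range n, crossSum (atomF D i) (atomF D n) := by
      rw [Finset.sum_range_succ, Finset.Ico_self, Finset.sum_empty, Nat.add_zero,
        ← Finset.sum_add_distrib]
      exact Finset.sum_congr rfl fun i hi =>
        Finset.sum_Ico_succ_top (Nat.succ_le_of_lt (Finset.mem_range.mp hi)) _
    have h4 : ∑ i ∈ Finset.range n, crossSum (atomF D i) (List.replicate c (atomF D n)).flatten
        = c * ∑ i ∈ Finset.range n, crossSum (atomF D i) (atomF D n) := by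
      rw [Finset.mul_sum]
      exact Finset.sum_congr rfl fun i _ => crossSum_flatten_replicate_right _ _ _
    rw [h2, Finset.sum_range_succ, h4, Nat.mul_add, Nat.mul_add, ← Nat.mul_assoc]
    nlinarith [ih, h1]





lemma blockList_eq_headPart {k l : ℕ} (D : Fin k → Fin l → ℕ) (m : ℕ) :
    blockList D (m+1) = headPart D (2^m) l := by
  unfold blockList headPart
  rw [← (List.ext_getElem (by simp) (by simp) : (List.finRange l).map (fun i : Fin l => (i:ℕ)) = List.range l), List.flatMap_map]
  refine List.flatMap_congr fun j _ => ?_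
  simp only [Function.comp, Nat.add_sub_cancel, atomF, dif_pos j.isLt, Fin.eta]

lemma headPart_prefix {k l : ℕ} (D : Fin k → Fin l → ℕ) (c : ℕ) {a b : ℕ} (h : a ≤ b) :
    headPart D c a <+: headPart D c b := by
  induction b with
  | zero => rw [Nat.le_zero.mp h]
  | succ b ih =>
    rcases Nat.lt_or_ge a (b+1) with h' | h'
    · exact (ih (Nat.lt_succ_iff.mp h')).trans ⟨_, (headPart_succ D c b).symm⟩
    · rw [Nat.le_antisymm h h']

lemma length_headPart {k l : ℕ} (D : Fin k → Fin l → ℕ) (c n : ℕ) :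
    (headPart D c n).length = c * ∑ i ∈ Finset.range n, (atomF D i).length := by
  induction n with
  | zero => simp [headPart]
  | succ n ih =>
    rw [headPart_succ, List.length_append, ih, Finset.sum_range_succ, Nat.mul_add]
    simp [List.length_flatten, List.map_replicate, Nat.mul_comm]

lemma sum_Iio_eq_range {l : ℕ} (t : Fin l) (g : ℕ → ℕ) :
    ∑ j ∈ Finset.Iio t, g ↑j = ∑ i ∈ Finset.range ↑t, g i := by
  rw [← Nat.Iio_eq_range, ← Fin.map_valEmbedding_Iio, Finset.sum_map]
  rfl

lemma sum_Ioo_eq_Ico {l : ℕ} (i t : Fin l) (g : ℕ → ℕ) :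
    ∑ j ∈ Finset.Ioo i t, g ↑j = ∑ x ∈ Finset.Ico ((i:ℕ)+1) ↑t, g x := by
  rw [Finset.Ico_add_one_left_eq_Ioo, ← Fin.map_valEmbedding_Ioo, Finset.sum_map]
  rfl

lemma getD_of_prefix_s18 {u v : List ℕ} (h : u <+: v) {n : ℕ} (hn : n < u.length) :
    v.getD n 0 = u.getD n 0 := by
  obtain ⟨w, rfl⟩ := h
  rw [List.getD_append _ _ _ _ hn]

lemma prefixList_succ {k l : ℕ} (D : Fin k → Fin l → ℕ) (n : ℕ) :
    prefixList D (n+1) = prefixList D n ++ blockList D (n+1) := by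
  unfold prefixList
  rw [List.range_succ, List.flatMap_append, List.flatMap_cons, List.flatMap_nil, List.append_nil]

lemma prefixList_prefix {k l : ℕ} (D : Fin k → Fin l → ℕ) {a b : ℕ} (h : a ≤ b) :
    prefixList D a <+: prefixList D b := by
  induction b with
  | zero => rw [Nat.le_zero.mp h]
  | succ b ih =>
    rcases Nat.lt_or_ge a (b+1) with h' | h'
    · exact (ih (Nat.lt_succ_iff.mp h')).trans ⟨_, (prefixList_succ D b).symm⟩
    · rw [Nat.le_antisymm h h']

lemma length_atomList {k l : ℕ} (D : Fin k → Fin l → ℕ) (j : Fin l) :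
    (atomList D j).length = ∑ x : Fin k, D x j := by
  rw [atomList, List.length_flatMap, ← Fin.sum_univ_def]
  simp [Function.comp]

lemma length_blockList {k l : ℕ} (D : Fin k → Fin l → ℕ) (n : ℕ) :
    (blockList D n).length = 2^(n-1) * ∑ j : Fin l, (atomList D j).length := by
  rw [blockList, List.length_flatMap, ← Fin.sum_univ_def, Finset.mul_sum]
  refine Finset.sum_congr rfl fun j _ => ?_
  simp [Function.comp, List.length_flatten, List.map_replicate, Nat.mul_comm]

lemma length_prefixList {k l : ℕ} (D : Fin k → Fin l → ℕ) (n : ℕ) :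
    (prefixList D n).length = (2^n - 1) * ∑ j : Fin l, (atomList D j).length := by
  induction n with
  | zero => simp [prefixList]
  | succ n ih =>
    rw [prefixList_succ, List.length_append, ih, length_blockList, Nat.add_sub_cancel]
    have h1 : 1 ≤ 2^n := Nat.one_le_two_pow
    have : 2^(n+1) - 1 = (2^n - 1) + 2^n := by
      rw [Nat.pow_succ]; omega
    rw [this, Nat.add_mul]

section Main

variable {k l : ℕ} (D : Fin k → Fin l → ℕ)


def partS (m : ℕ) (t : Fin l) (s : ℕ) : List ℕ :=
  headPart D (2^m) ↑t ++ (List.replicate s (atomF D ↑t)).flatten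

lemma atomF_coe (j : Fin l) : atomF D ↑j = atomList D j := by
  rw [atomF, dif_pos j.isLt, Fin.eta]

lemma partS_prefix (m : ℕ) (t : Fin l) {s : ℕ} (hs : s ≤ 2^m) :
    partS D m t s <+: blockList D (m+1) := by
  rw [blockList_eq_headPart]
  refine List.IsPrefix.trans ?_ (headPart_prefix D (2^m) t.isLt)
  rw [headPart_succ, partS]
  refine ⟨(List.replicate (2^m - s) (atomF D ↑t)).flatten, ?_⟩
  rw [List.append_assoc, ← List.flatten_append, ← List.replicate_add,
    Nat.add_sub_cancel' hs]

lemma length_partS (m : ℕ) (t : Fin l) (s : ℕ) :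
    (partS D m t s).length = partialLen D m t s := by
  rw [partS, List.length_append, length_headPart, partialLen, List.length_flatten,
    List.map_replicate, List.sum_replicate, smul_eq_mul, atomF_coe]
  congr 1
  rw [← sum_Iio_eq_range t (fun i => (atomF D i).length)]
  exact congrArg _ (Finset.sum_congr rfl fun j _ => by rw [atomF_coe])

lemma seqC_eval (hA : 1 ≤ ∑ j : Fin l, (atomList D j).length) (m : ℕ) (t : Fin l)
    {s : ℕ} (hs : s ≤ 2^m) {r : ℕ} (h1 : (prefixList D m).length < r)
    (h2 : r ≤ (prefixList D m).length + (partS D m t s).length) :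
    seqC D r = (partS D m t s).getD (r - 1 - (prefixList D m).length) 0 := by
  set L := (prefixList D m).length with hL
  have hLval : L = (2^m - 1) * ∑ j : Fin l, (atomList D j).length := length_prefixList D m
  have hm1 : 2^m - 1 ≤ L := by
    calc 2^m - 1 = (2^m - 1) * 1 := (Nat.mul_one _).symm
    _ ≤ L := by rw [hLval]; exact Nat.mul_le_mul_left _ hA
  have hmr : m + 1 ≤ r := by
    have : m < 2^m := Nat.lt_two_pow_self
    omega
  have hpre1 : prefixList D m ++ partS D m t s <+: prefixList D r := by
    refine List.IsPrefix.trans ?_ (prefixList_prefix D hmr)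
    rw [prefixList_succ]
    obtain ⟨x, hx⟩ := partS_prefix D m t hs
    exact ⟨x, by rw [List.append_assoc, hx]⟩
  have hlen : r - 1 < (prefixList D m ++ partS D m t s).length := by
    rw [List.length_append]; omega
  rw [seqC, getD_of_prefix_s18 hpre1 hlen,
    List.getD_append_right _ _ _ _ (by omega : (prefixList D m).length ≤ r - 1)]

lemma inner_ite_sum {n j : ℕ} (hj : j ≤ n) (Q : ℕ → Prop) [DecidablePred Q] :
    (∑ i ∈ Finset.range n, if i < j ∧ Q i then 1 else 0)
      = ∑ i ∈ Finset.range j, if Q i then 1 else 0 := by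
  have hr : Finset.range j = (Finset.range n).filter (· < j) := by
    ext x; simp only [Finset.mem_range, Finset.mem_filter]; omega
  rw [hr, Finset.sum_filter]
  refine Finset.sum_congr rfl fun i _ => ?_
  by_cases h1 : i < j <;> by_cases h2 : Q i <;> simp [h1, h2]

lemma pairsSum_eq_card (A : List ℕ) :
    pairsSum A = (((Finset.range A.length) ×ˢ (Finset.range A.length)).filter
      fun p : ℕ × ℕ => p.1 < p.2 ∧ A.getD p.1 0 < A.getD p.2 0).card := by
  rw [Finset.card_filter, Finset.sum_product, Finset.sum_comm, pairsSum]
  refine Finset.sum_congr rfl fun j hj => ?_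
  exact (inner_ite_sum (Nat.le_of_lt (Finset.mem_range.mp hj))
    (fun i => A.getD i 0 < A.getD j 0)).symm

lemma pairsSum_le_edges (hA : 1 ≤ ∑ j : Fin l, (atomList D j).length) (m : ℕ) (t : Fin l)
    {s : ℕ} (hs : s ≤ 2^m) :
    pairsSum (partS D m t s) ≤
      edgesBetween D (prefixList D m).length ((prefixList D m).length + (partS D m t s).length)
        (prefixList D m).length ((prefixList D m).length + (partS D m t s).length) := by
  set L := (prefixList D m).length with hL
  set S := partS D m t s with hS
  set b := L + S.length with hb
  have hset : {p : ℕ × ℕ | p.1 < p.2 ∧ L < p.1 ∧ p.1 ≤ b ∧ L < p.2 ∧ p.2 ≤ b ∧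
      seqC D p.1 < seqC D p.2} = ↑(((Finset.Ioc L b) ×ˢ (Finset.Ioc L b)).filter
      fun p : ℕ × ℕ => p.1 < p.2 ∧ seqC D p.1 < seqC D p.2) := by
    ext p
    simp only [Set.mem_setOf_eq, Finset.coe_filter, Finset.mem_product, Finset.mem_Ioc]
    tauto
  rw [edgesBetween, hset, Set.ncard_coe_finset, pairsSum_eq_card]
  refine Finset.card_le_card_of_injOn (fun p => (p.1 + (L+1), p.2 + (L+1))) ?_ ?_
  · rintro ⟨i, j⟩ hp
    simp only [Finset.mem_coe, Finset.mem_filter, Finset.mem_product, Finset.mem_range] at hp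
    obtain ⟨⟨hi, hj⟩, hij, hQ⟩ := hp
    simp only [Finset.mem_coe, Finset.mem_filter, Finset.mem_product, Finset.mem_Ioc]
    have ei : seqC D (i + (L+1)) = S.getD i 0 := by
      have := seqC_eval D hA m t hs (r := i + (L+1)) (by omega) (by rw [← hS]; omega)
      rwa [show i + (L+1) - 1 - L = i by omega] at this
    have ej : seqC D (j + (L+1)) = S.getD j 0 := by
      have := seqC_eval D hA m t hs (r := j + (L+1)) (by omega) (by rw [← hS]; omega)
      rwa [show j + (L+1) - 1 - L = j by omega] at this
    refine ⟨⟨⟨by omega, by omega⟩, by omega, by omega⟩, by omega, ?_⟩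
    rw [ei, ej]; exact hQ
  · rintro ⟨i, j⟩ _ ⟨i', j'⟩ _ h
    simp only [Prod.mk.injEq] at h
    exact Prod.ext (by omega) (by omega)

lemma pairsSum_partS_ge (m : ℕ) (t : Fin l) (s : ℕ) :
    Nat.choose (2^m) 2 * (∑ i ∈ Finset.range ↑t, crossSum (atomF D i) (atomF D i)) +
      (2^m * 2^m) * (∑ i ∈ Finset.range ↑t, ∑ j ∈ Finset.Ico (i+1) ↑t,
        crossSum (atomF D i) (atomF D j)) +
      Nat.choose s 2 * crossSum (atomF D ↑t) (atomF D ↑t) +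
      s * 2^m * (∑ i ∈ Finset.range ↑t, crossSum (atomF D i) (atomF D ↑t))
      ≤ pairsSum (partS D m t s) := by
  rw [partS, pairsSum_append, crossSum_flatten_replicate_right, crossSum_headPart_left]
  have h1 := pairsSum_headPart D (2^m) ↑t
  have h2 := pairsSum_flatten_replicate s (atomF D (↑t : ℕ))
  nlinarith [h1, h2]

end Main

/-- Lemma 3.5: the number of edges of `C` with both positions in the partial block of
`B_{m+1}` (its first `2^m` copies of each of `D_1, …, D_{t-1}` followed by its first
`s` copies of `D_t`) is at least
`C(2^m,2) Σ_{j=1}^{t-1} m_{j,j} + 4^m Σ_{i=1}^{t-2} Σ_{j=i+1}^{t-1} m_{i,j}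
  + C(s,2) m_{t,t} + s 2^m Σ_{i=1}^{t-1} m_{i,t}`. -/
theorem edges_within_partial_block (k l : ℕ) (hk : 2 ≤ k) (hl : 1 ≤ l)
    (D : Fin k → Fin l → ℕ) (m : ℕ) (hm : 1 ≤ m) (t : Fin l) (s : ℕ) (hs : s ≤ 2 ^ m) :
    Nat.choose (2 ^ m) 2 * (∑ j ∈ Finset.Iio t, Ment D j j) +
        4 ^ m * (∑ i ∈ Finset.Iio t, ∑ j ∈ Finset.Ioo i t, Ment D i j) +
        Nat.choose s 2 * Ment D t t +
        s * 2 ^ m * (∑ i ∈ Finset.Iio t, Ment D i t) ≤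
      edgesBetween D (prefixList D m).length ((prefixList D m).length + partialLen D m t s)
        (prefixList D m).length ((prefixList D m).length + partialLen D m t s) := by
  by_cases hA : (∑ j : Fin l, (atomList D j).length) = 0
  · have hD : ∀ (x : Fin k) (j : Fin l), D x j = 0 := by
      intro x j
      have h1 : (atomList D j).length = 0 :=
        Finset.sum_eq_zero_iff.mp hA j (Finset.mem_univ j)
      rw [length_atomList] at h1
      exact Finset.sum_eq_zero_iff.mp h1 x (Finset.mem_univ x)
    have hM : ∀ i j : Fin l, Ment D i j = 0 := by
      intro i j
      exact Finset.sum_eq_zero fun x _ => by rw [hD x i, Nat.zero_mul]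
    simp [hM]
  · have hA1 : 1 ≤ ∑ j : Fin l, (atomList D j).length := Nat.one_le_iff_ne_zero.mpr hA
    have key := (pairsSum_partS_ge D m t s).trans (pairsSum_le_edges D hA1 m t hs)
    rw [length_partS] at key
    refine le_trans (le_of_eq ?_) key
    have e1 : ∑ j ∈ Finset.Iio t, Ment D j j
        = ∑ i ∈ Finset.range ↑t, crossSum (atomF D i) (atomF D i) := by
      rw [← sum_Iio_eq_range t (fun i => crossSum (atomF D i) (atomF D i))]
      exact Finset.sum_congr rfl fun j _ => by rw [atomF_coe, crossSum_atom]
    have e2 : ∑ i ∈ Finset.Iio t, ∑ j ∈ Finset.Ioo i t, Ment D i j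
        = ∑ i ∈ Finset.range ↑t, ∑ j ∈ Finset.Ico (i+1) ↑t, crossSum (atomF D i) (atomF D j) := by
      rw [← sum_Iio_eq_range t
        (fun i => ∑ j ∈ Finset.Ico (i+1) ↑t, crossSum (atomF D i) (atomF D j))]
      refine Finset.sum_congr rfl fun i _ => ?_
      rw [← sum_Ioo_eq_Ico i t (fun x => crossSum (atomF D ↑i) (atomF D x))]
      exact Finset.sum_congr rfl fun j _ => by rw [atomF_coe, atomF_coe, crossSum_atom]
    have e3 : Ment D t t = crossSum (atomF D ↑t) (atomF D ↑t) := by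
      rw [atomF_coe, crossSum_atom]
    have e4 : ∑ i ∈ Finset.Iio t, Ment D i t
        = ∑ i ∈ Finset.range ↑t, crossSum (atomF D i) (atomF D ↑t) := by
      rw [← sum_Iio_eq_range t (fun i => crossSum (atomF D i) (atomF D ↑t))]
      exact Finset.sum_congr rfl fun j _ => by rw [atomF_coe, atomF_coe, crossSum_atom]
    rw [e1, e2, e3, e4, show (4:ℕ)^m = 2^m * 2^m by rw [← Nat.mul_pow]]
end
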